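/- arXiv:1808.00696 — 11 statements merged into one kernel-verified Lean document; each statement's English description precedes it below -/
import Mathlib

section
/- Let N > 3 be an integer and let λ₁ < λ₂ < ⋯ < λ_N be integers such that λ_n ≡ n − 1 (mod 2) for every n (i.e. the n-th value has parity (−1)^{n+1}). Then the rational number S = Σ_{n=1}^{N} (−1)^{λ_n} / ∏_{m ≠ n} (λ_n − λ_m) is nonzero and its 2-adic valuation is at least 1; equivalently, R = 1/S is a rational number whose denominator, written in lowest terms, is divisible by 2. -/
open Finset

noncomputable def Pd (s : Finset ℤ) (x : ℤ) : ℚ := ∏ y ∈ s.erase x, ((x : ℚ) - (y : ℚ))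

noncomputable def Td (s : Finset ℤ) (m : ℕ) : ℚ := ∑ x ∈ s, (x : ℚ) ^ m / Pd s x

lemma Pd_ne_zero (s : Finset ℤ) (x : ℤ) : Pd s x ≠ 0 := by
  refine Finset.prod_ne_zero_iff.mpr ?_
  intro y hy
  have hxy : y ≠ x := Finset.ne_of_mem_erase hy
  intro h
  have : (y : ℚ) = (x : ℚ) := by linarith [sub_eq_zero.mp h]
  exact hxy (by exact_mod_cast this)

lemma Td_key {s : Finset ℤ} {a : ℤ} (ha : a ∈ s) (m : ℕ) :
    Td s (m + 1) = a * Td s m + Td (s.erase a) m := by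
  have hsplit : ∀ x ∈ s, (x : ℚ) ^ (m + 1) / Pd s x
      = a * ((x : ℚ) ^ m / Pd s x) + ((x : ℚ) - a) * (x : ℚ) ^ m / Pd s x := by
    intro x _
    have := Pd_ne_zero s x
    field_simp
    ring
  have h2 : ∑ x ∈ s, ((x : ℚ) - a) * (x : ℚ) ^ m / Pd s x = Td (s.erase a) m := by
    rw [← Finset.add_sum_erase _ _ ha]
    have haz : ((a : ℚ) - a) * (a : ℚ) ^ m / Pd s a = 0 := by simp
    rw [haz, zero_add]
    apply Finset.sum_congr rfl
    intro x hx
    have hxa : x ≠ a := Finset.ne_of_mem_erase hx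
    have hps : Pd s x = ((x : ℚ) - a) * Pd (s.erase a) x := by
      unfold Pd
      rw [← Finset.mul_prod_erase (s.erase x) _
        (Finset.mem_erase.mpr ⟨Ne.symm hxa, ha⟩), Finset.erase_right_comm]
    have hxa' : ((x : ℚ) - a) ≠ 0 := by
      intro h
      exact hxa (by exact_mod_cast sub_eq_zero.mp h)
    have hq := Pd_ne_zero (s.erase a) x
    rw [hps]
    field_simp

  unfold Td
  rw [Finset.sum_congr rfl hsplit, Finset.sum_add_distrib, ← Finset.mul_sum, h2]
  rfl

lemma Td_zero : ∀ s : Finset ℤ, 2 ≤ s.card → Td s 0 = 0 := by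
  intro s
  induction s using Finset.strongInduction with
  | _ s ih =>
    intro hcard
    rcases eq_or_lt_of_le hcard with h2 | h3
    · -- card = 2
      obtain ⟨x, y, hxy, rfl⟩ := Finset.card_eq_two.mp h2.symm
      have hx : x ∉ ({y} : Finset ℤ) := by simp [hxy]
      have e1 : ({x, y} : Finset ℤ).erase x = {y} := Finset.erase_insert hx
      have e2 : ({x, y} : Finset ℤ).erase y = {x} := by
        rw [Finset.erase_insert_of_ne hxy, Finset.erase_singleton]
        rfl
      have hxy' : ((x : ℚ) - y) ≠ 0 := by
        intro h
        exact hxy (by exact_mod_cast sub_eq_zero.mp h)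
      unfold Td Pd
      rw [Finset.sum_pair hxy, e1, e2]
      simp only [Finset.prod_singleton, pow_zero]
      rw [show ((y:ℚ) - x) = -((x:ℚ) - y) by ring, div_neg]
      exact add_neg_cancel _
    · -- card ≥ 3
      have h1 : 1 < s.card := by omega
      obtain ⟨a, has, b, hbs, hab⟩ := Finset.one_lt_card.mp h1
      have hca : Td (s.erase a) 0 = 0 := by
        apply ih _ (Finset.erase_ssubset has)
        rw [Finset.card_erase_of_mem has]; omega
      have hcb : Td (s.erase b) 0 = 0 := by
        apply ih _ (Finset.erase_ssubset hbs)
        rw [Finset.card_erase_of_mem hbs]; omega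
      have k1 := Td_key has 0
      have k2 := Td_key hbs 0
      rw [hca] at k1
      rw [hcb] at k2
      have hab' : ((a : ℚ) - b) ≠ 0 := by
        intro h
        exact hab (by exact_mod_cast sub_eq_zero.mp h)
      have : ((a : ℚ) - b) * Td s 0 = 0 := by
        rw [sub_mul]
        rw [k1] at k2
        linarith [k2]
      rcases mul_eq_zero.mp this with h | h
      · exact absurd h hab'
      · exact h

lemma Td_int : ∀ (m : ℕ) (s : Finset ℤ), ∃ z : ℤ, Td s m = z := by
  intro m
  induction m with
  | zero =>
    intro s
    rcases lt_or_ge s.card 2 with h | h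
    · interval_cases h' : s.card
      · exact ⟨0, by simp [Td, Finset.card_eq_zero.mp h']⟩
      · obtain ⟨x, rfl⟩ := Finset.card_eq_one.mp h'
        exact ⟨1, by simp [Td, Pd]⟩
    · exact ⟨0, by simpa using Td_zero s h⟩
  | succ m ihm =>
    intro s
    rcases s.eq_empty_or_nonempty with rfl | ⟨a, ha⟩
    · exact ⟨0, by simp [Td]⟩
    · obtain ⟨z1, hz1⟩ := ihm s
      obtain ⟨z2, hz2⟩ := ihm (s.erase a)
      exact ⟨a * z1 + z2, by rw [Td_key ha, hz1, hz2]; push_cast; ring⟩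

lemma U_int (p : Polynomial ℤ) (s : Finset ℤ) :
    ∃ z : ℤ, ∑ x ∈ s, ((p.eval x : ℤ) : ℚ) / Pd s x = z := by
  induction p using Polynomial.induction_on' with
  | add p q hp hq =>
    obtain ⟨z1, hz1⟩ := hp
    obtain ⟨z2, hz2⟩ := hq
    refine ⟨z1 + z2, ?_⟩
    have hsum : ∑ x ∈ s, ((Polynomial.eval x (p + q) : ℤ) : ℚ) / Pd s x
        = (∑ x ∈ s, ((Polynomial.eval x p : ℤ) : ℚ) / Pd s x)
          + ∑ x ∈ s, ((Polynomial.eval x q : ℤ) : ℚ) / Pd s x := by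
      rw [← Finset.sum_add_distrib]
      apply Finset.sum_congr rfl
      intro x _
      rw [← add_div, Polynomial.eval_add]
      push_cast
      ring
    rw [hsum, hz1, hz2]
    push_cast
    ring
  | monomial n a =>
    obtain ⟨z, hz⟩ := Td_int n s
    refine ⟨a * z, ?_⟩
    have : ∀ x ∈ s, ((Polynomial.eval x (Polynomial.monomial n a) : ℤ) : ℚ) / Pd s x
        = (a : ℚ) * ((x : ℚ) ^ n / Pd s x) := by
      intro x _
      rw [Polynomial.eval_monomial]
      push_cast
      ring
    rw [Finset.sum_congr rfl this, ← Finset.mul_sum]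
    rw [show ∑ x ∈ s, (x:ℚ)^n / Pd s x = Td s n from rfl, hz]
    push_cast
    ring

lemma transfer {N : ℕ} (lam : Fin N → ℤ) (hinj : Function.Injective lam) (f : ℤ → ℚ) :
    ∑ i : Fin N, f (lam i) / ∏ j ∈ Finset.univ.erase i, ((lam i - lam j : ℤ) : ℚ)
      = ∑ x ∈ Finset.image lam Finset.univ, f x / Pd (Finset.image lam Finset.univ) x := by
  rw [Finset.sum_image (fun x _ y _ h => hinj h)]
  apply Finset.sum_congr rfl
  intro i _
  congr 1
  have himg : (Finset.image lam Finset.univ).erase (lam i)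
      = Finset.image lam (Finset.univ.erase i) := by
    ext y
    simp only [Finset.mem_erase, Finset.mem_image, Finset.mem_univ, true_and]
    constructor
    · rintro ⟨hne, j, rfl⟩
      exact ⟨j, ⟨fun h => hne (by rw [h]), trivial⟩, rfl⟩
    · rintro ⟨j, ⟨hji, -⟩, rfl⟩
      exact ⟨fun h => hji (hinj h), j, rfl⟩
  unfold Pd
  rw [himg, Finset.prod_image (fun x _ y _ h => hinj h)]
  apply Finset.prod_congr rfl
  intro j _
  push_cast
  ring

lemma parity_pow {a : ℤ} {m : ℕ} (h : a % 2 = (m : ℤ) % 2) :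
    (-1 : ℚ) ^ a = (-1 : ℚ) ^ m := by
  rcases Int.even_or_odd a with he | ho
  · have hm0 : (m : ℤ) % 2 = 0 := h ▸ Int.even_iff.mp he
    have hm : Even m := (Int.even_coe_nat m).mp (Int.even_iff.mpr hm0)
    rw [he.neg_one_zpow, hm.neg_one_pow]
  · have hm1 : (m : ℤ) % 2 = 1 := h ▸ Int.odd_iff.mp ho
    have hm : Odd m := by
      rw [Nat.odd_iff]
      omega
    rw [ho.neg_one_zpow, hm.neg_one_pow]

lemma val_factorial_lt {k : ℕ} (hk : 1 ≤ k) : padicValNat 2 (k.factorial) < k := by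
  have h := sub_one_mul_padicValNat_factorial (p := 2) k
  have hd : 1 ≤ (Nat.digits 2 k).sum := by
    have hne : Nat.digits 2 k ≠ [] := Nat.digits_ne_nil_iff_ne_zero.mpr (by omega)
    have hlast := Nat.getLast_digit_ne_zero 2 (m := k) (by omega)
    have hmem : (Nat.digits 2 k).getLast hne ∈ Nat.digits 2 k := List.getLast_mem hne
    calc 1 ≤ (Nat.digits 2 k).getLast hne := by omega
    _ ≤ (Nat.digits 2 k).sum := List.single_le_sum (fun x _ => Nat.zero_le x) _ hmem
  have hle : padicValNat 2 (k.factorial) ≤ k := by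
    nlinarith [Nat.sub_le k (Nat.digits 2 k).sum]
  omega

lemma S_ne_zero {N : ℕ} (hN : 0 < N) (lam : Fin N → ℤ) (hmono : StrictMono lam)
    (hparity : ∀ i : Fin N, lam i % 2 = (i : ℤ) % 2) :
    (∑ i : Fin N, (-1 : ℚ) ^ (lam i) /
      ∏ j ∈ Finset.univ.erase i, ((lam i - lam j : ℤ) : ℚ)) ≠ 0 := by
  have hpow : ∀ i : Fin N, (-1 : ℚ) ^ (lam i) = (-1 : ℚ) ^ ((i : ℕ)) := by
    intro i
    apply parity_pow
    exact_mod_cast hparity i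
  have hpos : 0 < (-1 : ℚ) ^ (N - 1) * ∑ i : Fin N, (-1 : ℚ) ^ (lam i) /
      ∏ j ∈ Finset.univ.erase i, ((lam i - lam j : ℤ) : ℚ) := by
    rw [Finset.mul_sum]
    apply Finset.sum_pos _ (Finset.univ_nonempty_iff.mpr (Fin.pos_iff_nonempty.mp hN))
    intro i _
    set P : ℚ := ∏ j ∈ Finset.univ.erase i, ((lam i - lam j : ℤ) : ℚ) with hPdef
    have hP : P ≠ 0 := by
      rw [hPdef]
      refine Finset.prod_ne_zero_iff.mpr ?_
      intro j hj
      have hne : lam i ≠ lam j := fun h => (Finset.ne_of_mem_erase hj) (hmono.injective h.symm)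
      intro hc
      apply hne
      have h0 : ((lam i - lam j : ℤ) : ℚ) = 0 := hc
      have h1 : (lam i - lam j : ℤ) = 0 := by exact_mod_cast h0
      omega
    have hA : (Finset.univ.erase i).filter (fun j => j < i) = Finset.Iio i := by
      ext j
      simp only [Finset.mem_filter, Finset.mem_erase, Finset.mem_univ, true_and, and_true,
        Finset.mem_Iio]
      constructor
      · rintro ⟨-, h⟩; exact h
      · intro h; exact ⟨ne_of_lt h, h⟩
    have hB : (Finset.univ.erase i).filter (fun j => ¬ j < i) = Finset.Ioi i := by
      ext j
      simp only [Finset.mem_filter, Finset.mem_erase, Finset.mem_univ, true_and, and_true,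
        Finset.mem_Ioi, not_lt]
      constructor
      · rintro ⟨hne, h⟩; exact lt_of_le_of_ne h (Ne.symm hne)
      · intro h; exact ⟨(ne_of_lt h).symm, le_of_lt h⟩
    have hsplit : P = (∏ j ∈ Finset.Iio i, ((lam i - lam j : ℤ) : ℚ))
        * ∏ j ∈ Finset.Ioi i, ((lam i - lam j : ℤ) : ℚ) := by
      rw [hPdef, ← Finset.prod_filter_mul_prod_filter_not (Finset.univ.erase i)
        (fun j => j < i), hA, hB]
    have hApos : 0 < ∏ j ∈ Finset.Iio i, ((lam i - lam j : ℤ) : ℚ) := by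
      apply Finset.prod_pos
      intro j hj
      have h1 := hmono (Finset.mem_Iio.mp hj)
      have h2 : ((lam j : ℚ)) < ((lam i : ℚ)) := by exact_mod_cast h1
      push_cast
      linarith
    have hBpos : 0 < (-1 : ℚ) ^ ((Finset.Ioi i).card)
        * ∏ j ∈ Finset.Ioi i, ((lam i - lam j : ℤ) : ℚ) := by
      have hprod : ∏ j ∈ Finset.Ioi i, (-((lam i - lam j : ℤ) : ℚ))
          = (-1 : ℚ) ^ ((Finset.Ioi i).card)
            * ∏ j ∈ Finset.Ioi i, ((lam i - lam j : ℤ) : ℚ) := by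
        rw [show (fun j => -((lam i - lam j : ℤ) : ℚ)) = fun j =>
          (-1 : ℚ) * ((lam i - lam j : ℤ) : ℚ) from funext fun j => (neg_one_mul _).symm]
        rw [Finset.prod_mul_distrib, Finset.prod_const]
      rw [← hprod]
      apply Finset.prod_pos
      intro j hj
      have h1 := hmono (Finset.mem_Ioi.mp hj)
      have h2 : ((lam i : ℚ)) < ((lam j : ℚ)) := by exact_mod_cast h1
      push_cast
      linarith
    have hcard : (Finset.Ioi i).card = N - 1 - (i : ℕ) := Fin.card_Ioi i
    have hexp : (-1 : ℚ) ^ (N - 1) * (-1 : ℚ) ^ ((i : ℕ))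
        = (-1 : ℚ) ^ (N - 1 - (i : ℕ)) := by
      have h1 : N - 1 - (i : ℕ) + (i : ℕ) = N - 1 := by
        have := i.isLt
        omega
      have h2 : (-1 : ℚ) ^ ((i : ℕ)) * (-1 : ℚ) ^ ((i : ℕ)) = 1 := by
        rw [← pow_add]
        exact Even.neg_one_pow ⟨(i : ℕ), rfl⟩
      have h3 : (-1 : ℚ) ^ (N - 1) = (-1 : ℚ) ^ (N - 1 - (i : ℕ)) * (-1 : ℚ) ^ ((i : ℕ)) := by
        rw [← pow_add, h1]
      rw [h3, mul_assoc, h2, mul_one]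
    have hnum : 0 < (-1 : ℚ) ^ (N - 1) * (-1 : ℚ) ^ ((i : ℕ)) * P := by
      rw [hexp, ← hcard, hsplit, show (-1 : ℚ) ^ ((Finset.Ioi i).card) *
        ((∏ j ∈ Finset.Iio i, ((lam i - lam j : ℤ) : ℚ))
          * ∏ j ∈ Finset.Ioi i, ((lam i - lam j : ℤ) : ℚ))
        = (∏ j ∈ Finset.Iio i, ((lam i - lam j : ℤ) : ℚ))
          * ((-1 : ℚ) ^ ((Finset.Ioi i).card)
            * ∏ j ∈ Finset.Ioi i, ((lam i - lam j : ℤ) : ℚ)) from by ring]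
      exact mul_pos hApos hBpos
    have hterm : (-1 : ℚ) ^ (N - 1) * ((-1 : ℚ) ^ (lam i) / P)
        = ((-1 : ℚ) ^ (N - 1) * (-1 : ℚ) ^ ((i : ℕ)) * P) / (P * P) := by
      rw [hpow i]
      field_simp
    rw [hterm]
    exact div_pos hnum (mul_self_pos.mpr hP)
  intro h
  rw [h, mul_zero] at hpos
  exact lt_irrefl 0 hpos

lemma val_ge_one {N : ℕ} (hN : 3 < N) (lam : Fin N → ℤ) (hmono : StrictMono lam)
    (hnn : ∀ i, 0 ≤ lam i) (S : ℚ)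
    (hS : S = ∑ i : Fin N, (-1 : ℚ) ^ (lam i) /
      ∏ j ∈ Finset.univ.erase i, ((lam i - lam j : ℤ) : ℚ))
    (hS0 : S ≠ 0) :
    1 ≤ padicValRat 2 S := by
  classical
  set s : Finset ℤ := Finset.image lam Finset.univ with hsdef
  have hcard : s.card = N := by
    rw [hsdef, Finset.card_image_of_injective _ hmono.injective, Finset.card_univ,
      Fintype.card_fin]
  have hs2 : 2 ≤ s.card := by omega
  set M : ℕ := (lam ⟨N - 1, by omega⟩).toNat with hMdef
  have hxs : ∀ x ∈ s, 0 ≤ x ∧ x.toNat ≤ M := by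
    intro x hx
    obtain ⟨i, -, rfl⟩ := Finset.mem_image.mp hx
    refine ⟨hnn i, ?_⟩
    have hle : lam i ≤ lam ⟨N - 1, by omega⟩ := by
      apply hmono.monotone
      rw [Fin.le_def]
      simp only []
      omega
    exact Int.toNat_le_toNat hle
  -- transfer the sum
  have hStrans : S = ∑ x ∈ s, (-1 : ℚ) ^ (x : ℤ) / Pd s x := by
    rw [hS, ← transfer lam hmono.injective (fun x => (-1 : ℚ) ^ (x : ℤ))]
  -- binomial expansion
  have hbin : ∀ x ∈ s, (-1 : ℚ) ^ (x : ℤ)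
      = ∑ k ∈ Finset.range (M + 1), ((x.toNat.choose k : ℕ) : ℚ) * (-2 : ℚ) ^ k := by
    intro x hx
    obtain ⟨hx0, hxM⟩ := hxs x hx
    have hxint : (x : ℤ) = ((x.toNat : ℕ) : ℤ) := (Int.toNat_of_nonneg hx0).symm
    have hzp : (-1 : ℚ) ^ (x : ℤ) = (-1 : ℚ) ^ (x.toNat : ℕ) := by
      conv_lhs => rw [hxint]
      rw [zpow_natCast]
    rw [hzp]
    have hb : (-1 : ℚ) = (-2) + 1 := by norm_num
    rw [hb, add_pow]
    rw [Finset.sum_subset (Finset.range_subset_range.mpr (by omega : x.toNat + 1 ≤ M + 1))]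
    · apply Finset.sum_congr rfl
      intro k _
      rw [one_pow]
      ring
    · intro k _ hk
      have : x.toNat < k := by
        simp only [Finset.mem_range, not_lt] at hk
        omega
      rw [Nat.choose_eq_zero_of_lt this]
      norm_num
  -- the D_k
  set Dk : ℕ → ℚ := fun k => ∑ x ∈ s, ((x.toNat.choose k : ℕ) : ℚ) / Pd s x with hDkdef
  have hSsum : S = ∑ k ∈ Finset.range (M + 1), (-2 : ℚ) ^ k * Dk k := by
    rw [hStrans, Finset.sum_congr rfl (fun x hx => by rw [hbin x hx, Finset.sum_div])]
    rw [Finset.sum_comm]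
    apply Finset.sum_congr rfl
    intro k _
    rw [hDkdef, Finset.mul_sum]
    apply Finset.sum_congr rfl
    intro x _
    ring
  -- integrality of k! * Dk
  have hz : ∀ k : ℕ, ∃ zz : ℤ,
      ∑ x ∈ s, (((descPochhammer ℤ k).eval x : ℤ) : ℚ) / Pd s x = zz := fun k =>
    U_int (descPochhammer ℤ k) s
  choose z hzspec using hz
  have hDz : ∀ k : ℕ, Dk k = (z k : ℚ) / (k.factorial : ℚ) := by
    intro k
    have hfact : (k.factorial : ℚ) ≠ 0 := by exact_mod_cast k.factorial_ne_zero
    rw [eq_div_iff hfact, ← hzspec k, hDkdef]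
    simp only []
    rw [Finset.sum_mul]
    apply Finset.sum_congr rfl
    intro x hx
    obtain ⟨hx0, -⟩ := hxs x hx
    have hxint : (x : ℤ) = ((x.toNat : ℕ) : ℤ) := (Int.toNat_of_nonneg hx0).symm
    have heval : (descPochhammer ℤ k).eval x = (x.toNat.descFactorial k : ℤ) := by
      rw [hxint]
      exact_mod_cast descPochhammer_eval_eq_descFactorial ℤ x.toNat k
    rw [heval, Nat.descFactorial_eq_factorial_mul_choose]
    push_cast
    ring
  have hz0 : z 0 = 0 := by
    have h1 : (z 0 : ℚ) = Td s 0 := by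
      rw [← hzspec 0, Td]
      apply Finset.sum_congr rfl
      intro x _
      simp [descPochhammer]
    rw [Td_zero s hs2] at h1
    exact_mod_cast h1
  -- 2-adic bookkeeping
  set v : ℕ → ℕ := fun k => padicValNat 2 (k.factorial) with hvdef
  set o : ℕ → ℕ := fun k => k.factorial / 2 ^ (v k) with hodef
  have ho : ∀ k, 2 ^ (v k) * o k = k.factorial := fun k =>
    Nat.mul_div_cancel' pow_padicValNat_dvd
  haveI : Fact (Nat.Prime 2) := ⟨Nat.prime_two⟩
  have hoodd : ∀ k, ¬ 2 ∣ o k := by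
    intro k hdvd
    obtain ⟨t, ht⟩ := hdvd
    have h2 : 2 ^ (v k + 1) ∣ k.factorial := by
      rw [← ho k, ht, pow_succ]
      exact ⟨t, by ring⟩
    exact pow_succ_padicValNat_not_dvd k.factorial_ne_zero h2
  have hvk : ∀ k, v k ≤ k := by
    intro k
    cases k with
    | zero => simp [hvdef]
    | succ n => exact le_of_lt (val_factorial_lt (Nat.succ_le_succ (Nat.zero_le n)))
  have ho0 : ∀ k, o k ≠ 0 := by
    intro k h
    exact hoodd k (by rw [h]; exact dvd_zero 2)
  set B : ℤ := ∏ k ∈ Finset.range (M + 1), (o k : ℤ) with hBdef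
  have hBodd : ¬ (2 : ℤ) ∣ B := by
    rw [hBdef]
    apply Finset.prod_induction (fun k => ((o k : ℤ))) (fun b => ¬ (2 : ℤ) ∣ b)
    · intro a b ha hb hab
      rcases (Int.Prime.dvd_mul' Nat.prime_two hab) with h | h
      · exact ha h
      · exact hb h
    · norm_num
    · intro k _
      intro h
      exact hoodd k (by exact_mod_cast h)
  set c : ℕ → ℤ := fun k => (-1 : ℤ) ^ k * 2 ^ (k - v k) * z k
      * ∏ k' ∈ (Finset.range (M + 1)).erase k, (o k' : ℤ) with hcdef
  have hterm : ∀ k ∈ Finset.range (M + 1),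
      (-2 : ℚ) ^ k * Dk k * (B : ℚ) = ((c k : ℤ) : ℚ) := by
    intro k hk
    have hBsplit : B = (o k : ℤ) * ∏ k' ∈ (Finset.range (M + 1)).erase k, (o k' : ℤ) :=
      (Finset.mul_prod_erase _ _ hk).symm
    have hfac : (k.factorial : ℚ) = 2 ^ (v k) * (o k : ℚ) := by
      rw [← ho k]
      push_cast
      ring
    have h2k : (2 : ℚ) ^ k = 2 ^ (k - v k) * 2 ^ (v k) := by
      rw [← pow_add]
      congr 1
      have := hvk k
      omega
    have hneg : (-2 : ℚ) ^ k = (-1 : ℚ) ^ k * 2 ^ k := by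
      rw [show (-2 : ℚ) = (-1) * 2 by norm_num, mul_pow]
    have hBQ : (B : ℚ) = (o k : ℚ)
        * ((∏ k' ∈ (Finset.range (M + 1)).erase k, (o k' : ℤ) : ℤ) : ℚ) := by
      rw [hBsplit]
      push_cast
      ring
    rw [hDz k, hneg, h2k, hBQ, hfac, hcdef]
    have h2v0 : ((2 : ℚ) ^ (v k)) ≠ 0 := by positivity
    have hok0 : ((o k : ℚ)) ≠ 0 := by exact_mod_cast ho0 k
    push_cast
    field_simp
  have hSB : S * (B : ℚ) = ((∑ k ∈ Finset.range (M + 1), c k : ℤ) : ℚ) := by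
    rw [hSsum, Finset.sum_mul, Finset.sum_congr rfl hterm]
    push_cast
    ring
  have hdvd : (2 : ℤ) ∣ ∑ k ∈ Finset.range (M + 1), c k := by
    apply Finset.dvd_sum
    intro k hk
    rcases Nat.eq_zero_or_pos k with rfl | hk1
    · simp [hcdef, hz0]
    · have hkv : k - v k ≠ 0 := by
        have hlt : v k < k := val_factorial_lt hk1
        omega
      rw [hcdef]
      exact dvd_mul_of_dvd_left
        (dvd_mul_of_dvd_left (dvd_mul_of_dvd_right (dvd_pow_self 2 hkv) _) _) _
  obtain ⟨A, hA⟩ := hdvd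
  have hB0 : B ≠ 0 := fun h => hBodd (by rw [h]; exact dvd_zero 2)
  have hBQ0 : (B : ℚ) ≠ 0 := by exact_mod_cast hB0
  have hA0 : A ≠ 0 := by
    intro h
    rw [h, mul_zero] at hA
    rw [hA] at hSB
    simp only [Int.cast_zero] at hSB
    exact hS0 (by
      rcases mul_eq_zero.mp hSB with h' | h'
      · exact h'
      · exact absurd h' hBQ0)
  have hmulval := padicValRat.mul (p := 2) hS0 hBQ0
  have hvB : padicValRat 2 ((B : ℤ) : ℚ) = 0 := by
    rw [padicValRat.of_int]
    norm_cast
    exact padicValInt.eq_zero_of_not_dvd (by exact_mod_cast hBodd)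
  have hv2A : padicValRat 2 (((2 * A : ℤ)) : ℚ) = 1 + (padicValInt 2 A : ℤ) := by
    rw [padicValRat.of_int, padicValInt.mul (by norm_num) hA0]
    have h22 : padicValInt 2 2 = 1 := by
      unfold padicValInt
      norm_num [padicValNat.self]
    rw [h22]
    push_cast
    ring
  have hfin : padicValRat 2 S + 0 = 1 + (padicValInt 2 A : ℤ) := by
    rw [← hvB, ← hmulval, hSB, hA, hv2A]
  have hnn' : (0 : ℤ) ≤ (padicValInt 2 A : ℤ) := Int.natCast_nonneg _
  omega

/-- **Lemma 4 (helper lemma).** Let `N > 3` and let `λ₀ < λ₁ < ⋯ < λ_{N-1}` be integers such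
that the `i`-th value has the same parity as `i`.  Then the rational number
`S = Σᵢ (−1)^{λᵢ} / ∏_{j ≠ i} (λᵢ − λⱼ)` is nonzero and has 2-adic valuation at least `1`
(equivalently, `R = 1/S` has a denominator divisible by `2`). -/
theorem helper_lemma_two_adic (N : ℕ) (hN : 3 < N) (lam : Fin N → ℤ)
    (hmono : StrictMono lam)
    (hparity : ∀ i : Fin N, lam i % 2 = (i : ℤ) % 2)
    (S : ℚ)
    (hS : S = ∑ i : Fin N,
      (-1 : ℚ) ^ (lam i) /
        ∏ j ∈ Finset.univ.erase i, ((lam i - lam j : ℤ) : ℚ)) :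
    S ≠ 0 ∧ 1 ≤ padicValRat 2 S := by
  have hne : S ≠ 0 := by
    rw [hS]
    exact S_ne_zero (by omega) lam hmono hparity
  refine ⟨hne, ?_⟩
  set t : ℤ := 2 * ((lam ⟨0, by omega⟩).natAbs : ℤ) with htdef
  set lam' : Fin N → ℤ := fun i => lam i + t with hlamdef
  have hmono' : StrictMono lam' := by
    intro a b h
    simp only [hlamdef]
    exact Int.add_lt_add_right (hmono h) t
  have hnn' : ∀ i, 0 ≤ lam' i := by
    intro i
    have h0 : lam ⟨0, by omega⟩ ≤ lam i := by
      apply hmono.monotone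
      rw [Fin.le_def]
      simp only []
      omega
    simp only [hlamdef, htdef]
    omega
  have hSeq : S = ∑ i : Fin N, (-1 : ℚ) ^ (lam' i) /
      ∏ j ∈ Finset.univ.erase i, ((lam' i - lam' j : ℤ) : ℚ) := by
    rw [hS]
    apply Finset.sum_congr rfl
    intro i _
    have hp : (-1 : ℚ) ^ (lam' i) = (-1 : ℚ) ^ (lam i) := by
      simp only [hlamdef]
      rw [zpow_add₀ (by norm_num : (-1 : ℚ) ≠ 0)]
      have hev : Even t := ⟨((lam ⟨0, by omega⟩).natAbs : ℤ), by rw [htdef]; ring⟩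
      rw [hev.neg_one_zpow, mul_one]
    rw [hp]
    congr 1
    apply Finset.prod_congr rfl
    intro j _
    simp only [hlamdef]
    push_cast
    ring
  exact val_ge_one hN lam' hmono' hnn' S hSeq hne
end

section
/- Let G be a connected finite simple graph with adjacency matrix A and maximum vertex degree d, let a be a vertex of G with eccentricity ε_a, and let Δ ≥ 1 be an integer such that any two distinct elements of Φ_a differ in absolute value by at least √Δ. Then ε_a ≤ 2d/√Δ. In particular, if G has perfect state transfer from a to some vertex b, the distance from a to b is at most 2d/√Δ. -/
open Matrix Finset

/-- The orthogonal projection onto the `μ`-eigenspace of a matrix `A`. -/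
noncomputable def eigProj {n : Type*} [Fintype n] [DecidableEq n] (A : Matrix n n ℝ) (μ : ℝ)
    (x : EuclideanSpace ℝ n) : EuclideanSpace ℝ n :=
  (Submodule.orthogonalProjectionOnto (Module.End.eigenspace (Matrix.toEuclideanLin A) μ) x :
    EuclideanSpace ℝ n)

/-- `Φ_a`: the set of eigenvalues of `A` whose eigenprojection does not annihilate `δ_a`. -/
noncomputable def eigSupport {n : Type*} [Fintype n] [DecidableEq n] (A : Matrix n n ℝ)
    (a : n) : Set ℝ :=
  {μ | eigProj A μ (EuclideanSpace.single a 1) ≠ 0}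

open scoped RealInnerProductSpace


lemma gap_lemma (S : Finset ℝ) (hne : S.Nonempty) (s dd : ℝ)
    (hbd : ∀ μ ∈ S, |μ| ≤ dd)
    (hsep : ∀ μ ∈ S, ∀ ν ∈ S, μ ≠ ν → s ≤ |μ - ν|) :
    ((S.card : ℝ) - 1) * s ≤ 2 * dd := by
  set m := S.card with hm
  have hm0 : 0 < m := Finset.card_pos.mpr hne
  let f : Fin m → ℝ := fun i => ((S.orderIsoOfFin rfl i : S) : ℝ)
  have hmem : ∀ i, f i ∈ S := fun i => (S.orderIsoOfFin rfl i).2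
  have hmono : StrictMono f := fun i j hij => by
    exact_mod_cast (S.orderIsoOfFin rfl).strictMono hij
  have key : ∀ n (h : n < m), (n : ℝ) * s ≤ f ⟨n, h⟩ - f ⟨0, hm0⟩ := by
    intro n
    induction n with
    | zero => intro h; simp
    | succ k ih =>
      intro h
      have hk : k < m := Nat.lt_of_succ_lt h
      have h1 : f ⟨k, hk⟩ < f ⟨k+1, h⟩ := hmono (by simp [Fin.lt_def])
      have h2 : s ≤ |f ⟨k+1, h⟩ - f ⟨k, hk⟩| :=
        hsep _ (hmem _) _ (hmem _) (ne_of_gt h1)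
      rw [abs_of_pos (by linarith)] at h2
      have := ih hk
      push_cast
      linarith
  have hlast : ((m : ℝ) - 1) * s ≤ f ⟨m-1, by omega⟩ - f ⟨0, hm0⟩ := by
    have h1 := key (m-1) (by omega)
    have h2 : ((m - 1 : ℕ) : ℝ) = (m : ℝ) - 1 := by
      have h3 : 1 ≤ m := hm0
      push_cast [Nat.cast_sub h3]; ring
    rw [h2] at h1
    exact h1
  have b1 := hbd _ (hmem ⟨m-1, by omega⟩)
  have b2 := hbd _ (hmem ⟨0, hm0⟩)
  have := abs_le.1 b1
  have := abs_le.1 b2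
  linarith


lemma eig_bound {V : Type*} [Fintype V] [DecidableEq V]
    (G : SimpleGraph V) [DecidableRel G.Adj] (d : ℕ)
    (hd : ∀ v, G.degree v ≤ d) {μ : ℝ}
    (hμ : Module.End.HasEigenvalue (Matrix.toEuclideanLin (G.adjMatrix ℝ)) μ) :
    |μ| ≤ (d : ℝ) := by
  set A := G.adjMatrix ℝ with hA
  have hμ' : Module.End.HasEigenvalue (Matrix.toLin' A) μ := by
    obtain ⟨v, hv, hv0⟩ := hμ.exists_hasEigenvector
    refine Module.End.hasEigenvalue_of_hasEigenvector (x := (WithLp.equiv 2 _) v) ⟨?_, ?_⟩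
    · rw [Module.End.mem_eigenspace_iff]
      exact congrArg (WithLp.equiv 2 _) (Module.End.mem_eigenspace_iff.mp hv)
    · simpa using hv0
  obtain ⟨k, hk⟩ := eigenvalue_mem_ball hμ'
  rw [Metric.mem_closedBall] at hk
  have hdiag : A k k = 0 := by simp [hA]
  rw [hdiag, Real.dist_0_eq_abs] at hk
  refine hk.trans ?_
  have h1 : ∑ j ∈ Finset.univ.erase k, ‖A k j‖ ≤ ∑ j, A k j := by
    calc ∑ j ∈ Finset.univ.erase k, ‖A k j‖ ≤ ∑ j, ‖A k j‖ :=
          Finset.sum_le_sum_of_subset_of_nonneg (Finset.erase_subset _ _)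
            (fun j _ _ => norm_nonneg _)
      _ = ∑ j, A k j := by
          apply Finset.sum_congr rfl
          intro j _
          by_cases h : G.Adj k j <;> simp [hA, SimpleGraph.adjMatrix_apply, h]
  refine h1.trans ?_
  have h2 : ∑ j, A k j = (G.degree k : ℝ) := by
    have := SimpleGraph.adjMatrix_mulVec_const_apply (G := G) (α := ℝ) (a := 1) (v := k)
    simpa [Matrix.mulVec, dotProduct, hA] using this
  rw [h2]
  exact_mod_cast hd k

lemma my_exists_dist_eq {V : Type*} [Fintype V] (G : SimpleGraph V) (hconn : G.Connected) (a : V)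
    {k : ℕ} (hk : k ≤ Finset.univ.sup (G.dist a)) : ∃ v, G.dist a v = k := by
  set ε := Finset.univ.sup (G.dist a) with hε
  -- step down
  have step : ∀ m : ℕ, (∃ v, G.dist a v = m + 1) → ∃ w, G.dist a w = m := by
    rintro m ⟨v, hv⟩
    have hr : G.Reachable v a := (hconn v a)
    obtain ⟨p, hp⟩ := hr.exists_walk_length_eq_dist
    rw [SimpleGraph.dist_comm, hv] at hp
    cases p with
    | nil => simp at hp
    | cons h q =>
      rename_i w
      refine ⟨w, le_antisymm ?_ ?_⟩
      · have := G.dist_le q.reverse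
        simpa [hp.symm, SimpleGraph.dist_comm] using by
          have h2 : G.dist w a ≤ q.length := G.dist_le q
          rw [SimpleGraph.dist_comm] at h2
          simp only [SimpleGraph.Walk.length_cons] at hp
          omega
      · by_contra hlt
        push_neg at hlt
        obtain ⟨r, hr'⟩ := (hconn a w).exists_walk_length_eq_dist
        have h3 : G.dist a v ≤ (r.concat h.symm).length := G.dist_le _
        rw [SimpleGraph.Walk.length_concat, hr', hv] at h3
        omega
  -- top attained
  obtain ⟨v0, -, hv0⟩ := Finset.exists_mem_eq_sup Finset.univ ⟨a, Finset.mem_univ a⟩ (G.dist a)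
  have down : ∀ n : ℕ, ∃ v, G.dist a v = ε - n := by
    intro n
    induction n with
    | zero => exact ⟨v0, by omega⟩
    | succ m ih =>
      rcases Nat.eq_zero_or_pos (ε - m) with h0 | hpos
      · obtain ⟨v, hv⟩ := ih
        exact ⟨v, by omega⟩
      · obtain ⟨v, hv⟩ := ih
        obtain ⟨w, hw⟩ := step (ε - (m+1)) ⟨v, by omega⟩
        exact ⟨w, hw⟩
  obtain ⟨v, hv⟩ := down (ε - k)
  exact ⟨v, by omega⟩


-- coordinate lemma
lemma pow_apply_coord {V : Type*} [Fintype V] [DecidableEq V] (A : Matrix V V ℝ)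
    (k : ℕ) (x : EuclideanSpace ℝ V) (v : V) :
    ((Matrix.toEuclideanLin A ^ k) x) v = ((A ^ k) *ᵥ (WithLp.equiv 2 _ x)) v := by
  induction k generalizing x with
  | zero => simp [Matrix.one_mulVec]
  | succ n ih =>
    rw [pow_succ, Module.End.mul_apply]
    have h1 : (Matrix.toEuclideanLin A) x
        = (WithLp.equiv 2 _).symm (A *ᵥ (WithLp.equiv 2 _) x) := rfl
    rw [h1, ih]
    have h2 : (WithLp.equiv 2 (V → ℝ)) ((WithLp.equiv 2 (V → ℝ)).symm (A *ᵥ (WithLp.equiv 2 (V → ℝ)) x)) = A *ᵥ (WithLp.equiv 2 (V → ℝ)) x := Equiv.apply_symm_apply _ _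
    rw [h2, Matrix.mulVec_mulVec, ← pow_succ]

-- positivity of walk count at exact distance
lemma walkcount_pos {V : Type*} [Fintype V] [DecidableEq V]
    (G : SimpleGraph V) [DecidableRel G.Adj] (hconn : G.Connected) (a v : V)
    (k : ℕ) (hk : G.dist a v = k) : (0 : ℝ) < ((G.adjMatrix ℝ) ^ k) v a := by
  rw [SimpleGraph.adjMatrix_pow_apply_eq_card_walk]
  have : 0 < Fintype.card {p : G.Walk v a | p.length = k} := by
    rw [Fintype.card_pos_iff]
    obtain ⟨p, hp⟩ := (hconn v a).exists_walk_length_eq_dist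
    exact ⟨⟨p, by rw [Set.mem_setOf_eq, hp, SimpleGraph.dist_comm, hk]⟩⟩
  exact_mod_cast this

lemma walkcount_zero {V : Type*} [Fintype V] [DecidableEq V]
    (G : SimpleGraph V) [DecidableRel G.Adj] (a v : V)
    (j k : ℕ) (hk : G.dist a v = k) (hj : j < k) : ((G.adjMatrix ℝ) ^ j) v a = 0 := by
  rw [SimpleGraph.adjMatrix_pow_apply_eq_card_walk]
  have : Fintype.card {p : G.Walk v a | p.length = j} = 0 := by
    rw [Fintype.card_eq_zero_iff]
    constructor
    rintro ⟨p, hp⟩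
    have := G.dist_le p
    rw [Set.mem_setOf_eq] at hp
    rw [hp, SimpleGraph.dist_comm, hk] at this
    omega
  rw [this]; simp


lemma core {V : Type*} [Fintype V] [DecidableEq V]
    (G : SimpleGraph V) [DecidableRel G.Adj] (hconn : G.Connected) (a : V) :
    ∃ S : Finset ℝ, S.Nonempty ∧ (↑S ⊆ eigSupport (G.adjMatrix ℝ) a) ∧
      (∀ μ ∈ S, Module.End.HasEigenvalue (Matrix.toEuclideanLin (G.adjMatrix ℝ)) μ) ∧
      Finset.univ.sup (G.dist a) + 1 ≤ S.card := by
  classical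
  set A := G.adjMatrix ℝ with hA
  have hHerm : A.IsHermitian := by
    rw [Matrix.IsHermitian, Matrix.conjTranspose_eq_transpose_of_trivial]
    exact G.isSymm_adjMatrix
  have hT : (Matrix.toEuclideanLin A).IsSymmetric := Matrix.isHermitian_iff_isSymmetric.mp hHerm
  have hn : Module.finrank ℝ (EuclideanSpace ℝ V) = Fintype.card V := finrank_euclideanSpace
  set b := hT.eigenvectorBasis hn with hb
  set lam := hT.eigenvalues hn with hlam
  set δ : EuclideanSpace ℝ V := EuclideanSpace.single a 1 with hδ
  set c : Fin (Fintype.card V) → ℝ := fun i => b.repr δ i with hc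
  set s₀ := Finset.univ.filter (fun i => c i ≠ 0) with hs₀
  set S := s₀.image lam with hS
  have hδne : δ ≠ 0 := by
    intro h
    have h1 : δ a = 1 := by simp [hδ, EuclideanSpace.single_apply]
    rw [h] at h1
    simp at h1
  have hrepr : ∑ i, c i • b i = δ := b.sum_repr δ
  have hS_ne : S.Nonempty := by
    rw [hS]
    apply Finset.Nonempty.image
    rw [hs₀, Finset.filter_nonempty_iff]
    by_contra hcon
    push_neg at hcon
    apply hδne
    rw [← hrepr]
    apply Finset.sum_eq_zero
    intro i _
    rw [hcon i (Finset.mem_univ i), zero_smul]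
  -- eigenvector membership
  have hb_mem : ∀ i, b i ∈ Module.End.eigenspace (Matrix.toEuclideanLin A) (lam i) :=
    fun i => (hT.hasEigenvector_eigenvectorBasis hn i).1
  -- subset of eigSupport
  have hsub : (↑S : Set ℝ) ⊆ eigSupport A a := by
    intro μ hμ
    rw [hS] at hμ
    norm_cast at hμ
    rw [Finset.mem_image] at hμ
    obtain ⟨i₀, hi₀, hlami₀⟩ := hμ
    rw [hs₀, Finset.mem_filter] at hi₀
    have hci₀ : c i₀ ≠ 0 := hi₀.2
    rw [eigSupport, Set.mem_setOf_eq]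
    intro hproj
    apply hci₀
    have hmem : b i₀ ∈ Module.End.eigenspace (Matrix.toEuclideanLin A) μ := hlami₀ ▸ hb_mem i₀
    have h1 : (⟪b i₀, eigProj A μ δ⟫) = c i₀ := by
      rw [eigProj, ← Submodule.starProjection_apply, ← Submodule.inner_starProjection_left_eq_right,
        Submodule.starProjection_apply]
      have h2 : (Submodule.orthogonalProjectionOnto (Module.End.eigenspace (Matrix.toEuclideanLin A) μ) (b i₀) :
          EuclideanSpace ℝ V) = b i₀ :=
        congrArg Subtype.val
          (Submodule.orthogonalProjectionOnto_mem_subspace_eq_self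
            (⟨b i₀, hmem⟩ : Module.End.eigenspace (Matrix.toEuclideanLin A) μ))
      rw [h2, hc]
      exact (b.repr_apply_apply δ i₀).symm
    rw [hδ] at h1
    rw [hproj, inner_zero_right] at h1
    exact h1.symm
  refine ⟨S, hS_ne, hsub, ?_, ?_⟩
  · intro μ hμ
    rw [hS, Finset.mem_image] at hμ
    obtain ⟨i, -, rfl⟩ := hμ
    exact hT.hasEigenvalue_eigenvalues hn i
  set ε := Finset.univ.sup (G.dist a) with hεdef
  set w : ℝ → EuclideanSpace ℝ V :=
    fun μ => ∑ i ∈ s₀.filter (fun i => lam i = μ), c i • b i with hw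
  have hTk : ∀ (k : ℕ) i, ((Matrix.toEuclideanLin A) ^ k) (b i) = (lam i) ^ k • b i := by
    intro k i
    induction k with
    | zero => simp
    | succ n ih =>
      rw [pow_succ', Module.End.mul_apply, ih, LinearMap.map_smul]
      have happ : (Matrix.toEuclideanLin A) (b i) = lam i • b i := by
        exact_mod_cast hT.apply_eigenvectorBasis hn i
      rw [happ, smul_smul, ← pow_succ]
  have key : ∀ k : ℕ, ((Matrix.toEuclideanLin A) ^ k) δ = ∑ μ ∈ S, μ ^ k • w μ := by
    intro k
    have lhs : ((Matrix.toEuclideanLin A) ^ k) δ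
        = ∑ i ∈ s₀, (lam i) ^ k • (c i • b i) := by
      conv_lhs => rw [← hrepr]
      rw [map_sum]
      have : ∀ i ∈ Finset.univ, ((Matrix.toEuclideanLin A) ^ k) (c i • b i)
          = (lam i) ^ k • (c i • b i) := by
        intro i _
        rw [LinearMap.map_smul, hTk k i, smul_comm]
      rw [Finset.sum_congr rfl this, hs₀]
      refine (Finset.sum_filter_of_ne ?_).symm
      intro x _ hx h0
      apply hx
      rw [h0]
      simp
    rw [lhs, hS]
    have rhs : ∑ μ ∈ s₀.image lam, μ ^ k • w μ
        = ∑ μ ∈ s₀.image lam, ∑ i ∈ s₀.filter (fun i => lam i = μ),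
            (lam i) ^ k • (c i • b i) := by
      apply Finset.sum_congr rfl
      intro μ hμ
      simp only [hw, Finset.smul_sum]
      apply Finset.sum_congr rfl
      intro i hi
      rw [Finset.mem_filter] at hi
      rw [hi.2]
    rw [rhs, Finset.sum_fiberwise_eq_sum_filter s₀ (s₀.image lam) lam
      (fun i => (lam i) ^ k • (c i • b i))]
    have hfil : s₀.filter (fun i => lam i ∈ s₀.image lam) = s₀ :=
      Finset.filter_true_of_mem (fun i hi => Finset.mem_image_of_mem lam hi)
    rw [hfil]
  -- the span
  set W : Submodule ℝ (EuclideanSpace ℝ V) := Submodule.span ℝ ↑(S.image w) with hW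
  have hrange : ∀ k : ℕ, ((Matrix.toEuclideanLin A) ^ k) δ ∈ W := by
    intro k
    rw [key k]
    apply Submodule.sum_mem
    intro μ hμ
    exact Submodule.smul_mem _ _
      (Submodule.subset_span (Finset.mem_coe.mpr (Finset.mem_image_of_mem w hμ)))
  set g : Fin (ε + 1) → EuclideanSpace ℝ V :=
    fun k => ((Matrix.toEuclideanLin A) ^ (k : ℕ)) δ with hg
  have hcoord : ∀ (γ : Fin (ε+1) → ℝ), ∑ j, γ j • g j = 0 →
      ∀ v : V, ∑ j : Fin (ε+1), γ j * ((A ^ (j:ℕ)) v a) = 0 := by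
    intro γ hγ v
    have h1 := congrArg (fun x : EuclideanSpace ℝ V =>
      (inner ℝ (EuclideanSpace.single v (1:ℝ)) x : ℝ)) hγ
    simp only [inner_sum, inner_smul_right, inner_zero_right] at h1
    rw [← h1]
    apply Finset.sum_congr rfl
    intro j _
    congr 1
    have h2 : (inner ℝ (EuclideanSpace.single v (1:ℝ)) (g j) : ℝ) = g j v := by
      rw [EuclideanSpace.inner_single_left]
      simp
    rw [h2]
    simp only [hg]
    have h3 := pow_apply_coord A (j : ℕ) δ v
    rw [h3, hδ]
    have h4 : (WithLp.equiv 2 (V → ℝ)) (EuclideanSpace.single a (1:ℝ)) = Pi.single a 1 := by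
      rw [EuclideanSpace.single]
      exact Equiv.apply_symm_apply _ _
    rw [h4, Matrix.mulVec_single]
    simp
  have hind : LinearIndependent ℝ g := by
    rw [Fintype.linearIndependent_iff]
    intro γ hγ
    have coord := hcoord γ hγ
    have zero_all : ∀ n : ℕ, ∀ j : Fin (ε+1), ε - (j:ℕ) = n → γ j = 0 := by
      intro n
      induction n using Nat.strong_induction_on with
      | _ n ih =>
        intro j hj
        have hjle : (j : ℕ) ≤ ε := Nat.lt_succ_iff.mp j.isLt
        obtain ⟨v, hv⟩ := my_exists_dist_eq G hconn a (k := (j:ℕ)) hjle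
        have hz := coord v
        rw [Finset.sum_eq_single j] at hz
        · have hpos := walkcount_pos G hconn a v (j:ℕ) hv
          exact (mul_eq_zero.mp hz).resolve_right (ne_of_gt hpos)
        · intro i _ hij
          have hij' : (i : ℕ) ≠ (j : ℕ) := fun h => hij (Fin.ext h)
          rcases lt_or_gt_of_ne hij' with hlt | hgt
          · rw [walkcount_zero G a v (i:ℕ) (j:ℕ) hv hlt, mul_zero]
          · have hile : (i : ℕ) ≤ ε := Nat.lt_succ_iff.mp i.isLt
            have : γ i = 0 := ih (ε - (i:ℕ)) (by omega) i rfl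
            rw [this, zero_mul]
        · intro h
          exact absurd (Finset.mem_univ j) h
    intro j
    exact zero_all (ε - (j:ℕ)) j rfl
  -- dimension count
  have h5 : ε + 1 = Module.finrank ℝ (Submodule.span ℝ (Set.range g)) := by
    rw [finrank_span_eq_card hind, Fintype.card_fin]
  have h6 : Submodule.span ℝ (Set.range g) ≤ W := by
    rw [Submodule.span_le]
    rintro x ⟨k, rfl⟩
    exact hrange (k : ℕ)
  have h7 : Module.finrank ℝ (Submodule.span ℝ (Set.range g)) ≤ Module.finrank ℝ W :=
    Submodule.finrank_mono h6
  have h8 : Module.finrank ℝ W ≤ (S.image w).card := finrank_span_finset_le_card (S.image w)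
  have h9 : (S.image w).card ≤ S.card := Finset.card_image_le
  omega

/-- **The degree-distance bound.** Let `G` be a connected finite simple graph with maximum
degree `d`, let `a` be a vertex of eccentricity `ε_a`, and let `Δ ≥ 1` be an integer such
that distinct elements of `Φ_a` differ by at least `√Δ`.  Then `ε_a ≤ 2d/√Δ`; in
particular, if `G` has perfect state transfer from `a` to some vertex `b`, then the
distance from `a` to `b` is at most `2d/√Δ`. -/
theorem degree_distance_bound {V : Type*} [Fintype V] [DecidableEq V]
    (G : SimpleGraph V) [DecidableRel G.Adj] (hconn : G.Connected)
    (d : ℕ) (hd : d = Finset.univ.sup (fun v => G.degree v))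
    (a : V) (ε : ℕ) (hε : ε = Finset.univ.sup (G.dist a))
    (Δ : ℕ) (hΔ : 1 ≤ Δ)
    (hsep : ∀ μ ∈ eigSupport (G.adjMatrix ℝ) a, ∀ ν ∈ eigSupport (G.adjMatrix ℝ) a,
      μ ≠ ν → Real.sqrt Δ ≤ |μ - ν|) :
    (ε : ℝ) ≤ 2 * d / Real.sqrt Δ ∧
      ∀ b : V, (∃ t₀ : ℝ, 0 < t₀ ∧
          ‖NormedSpace.exp ((-Complex.I * t₀) • G.adjMatrix ℂ) b a‖ = 1) →
        (G.dist a b : ℝ) ≤ 2 * d / Real.sqrt Δ := by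
  have hΔpos : (0 : ℝ) < (Δ : ℕ) := by exact_mod_cast Nat.lt_of_lt_of_le Nat.zero_lt_one hΔ
  have hsqrt_pos : 0 < Real.sqrt Δ := Real.sqrt_pos.mpr hΔpos
  obtain ⟨S, hS_ne, hsub, heig, hcard⟩ := core G hconn a
  have hdbound : ∀ μ ∈ S, |μ| ≤ (d : ℝ) := fun μ hμ =>
    eig_bound G d (fun v => hd ▸ Finset.le_sup (f := fun v => G.degree v) (Finset.mem_univ v)) (heig μ hμ)
  have hsep' : ∀ μ ∈ S, ∀ ν ∈ S, μ ≠ ν → Real.sqrt Δ ≤ |μ - ν| := fun μ hμ ν hν h =>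
    hsep μ (hsub hμ) ν (hsub hν) h
  have hgap := gap_lemma S hS_ne (Real.sqrt Δ) d hdbound hsep'
  have hεcard : ε + 1 ≤ S.card := hε ▸ hcard
  have hε' : (ε : ℝ) ≤ (S.card : ℝ) - 1 := by
    have : (ε : ℝ) + 1 ≤ (S.card : ℝ) := by exact_mod_cast hεcard
    linarith
  have hmain : (ε : ℝ) ≤ 2 * d / Real.sqrt Δ := by
    rw [le_div_iff₀ hsqrt_pos]
    calc (ε : ℝ) * Real.sqrt Δ ≤ ((S.card : ℝ) - 1) * Real.sqrt Δ := by
          apply mul_le_mul_of_nonneg_right hε' (le_of_lt hsqrt_pos)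
      _ ≤ 2 * d := hgap
  refine ⟨hmain, fun b _ => ?_⟩
  have hdist : G.dist a b ≤ ε := hε ▸ Finset.le_sup (Finset.mem_univ b)
  exact le_trans (by exact_mod_cast hdist) hmain
end

section
/- Let G be a connected finite simple graph with adjacency matrix A and let a be a vertex of G with eccentricity ε_a. Then ε_a + 1 ≤ |Φ_a|, i.e. the number of distinct eigenvalues of A whose eigenprojection does not annihilate δ_a is at least one more than the eccentricity of a. -/
open Module.End in
/-- Splitting a walk at position `t`. -/
lemma walk_split {V : Type*} {G : SimpleGraph V} {a b : V} (p : G.Walk a b) (t : ℕ)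
    (ht : t ≤ p.length) :
    ∃ (c : V) (q : G.Walk a c) (r : G.Walk c b), q.length = t ∧ r.length = p.length - t := by
  induction p generalizing t with
  | nil =>
    obtain rfl : t = 0 := by simpa using ht
    exact ⟨_, .nil, .nil, rfl, by simp⟩
  | @cons u x w h p ih =>
    cases t with
    | zero => exact ⟨u, .nil, .cons h p, rfl, by simp⟩
    | succ t =>
      obtain ⟨c, q, r, hq, hr⟩ := ih t (by simpa using ht)
      exact ⟨c, .cons h q, r, by simp [hq], by simpa using hr⟩

open Module.End in
lemma eigProj_pow_apply {n : Type*} [Fintype n] [DecidableEq n] (A : Matrix n n ℝ) (μ : ℝ)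
    (x : EuclideanSpace ℝ n) (k : ℕ) (hx : x ∈ eigenspace (Matrix.toEuclideanLin A) μ) :
    ((Matrix.toEuclideanLin A)^k) x = μ^k • x := by
  induction k with
  | zero => simp
  | succ k ih =>
    rw [pow_succ, Module.End.mul_apply, mem_eigenspace_iff.mp hx, map_smul, ih,
      smul_smul, pow_succ, mul_comm]

open Module.End in
lemma spectral_sum {n : Type*} [Fintype n] [DecidableEq n] (A : Matrix n n ℝ)
    (hsym : (Matrix.toEuclideanLin A).IsSymmetric) (x : EuclideanSpace ℝ n) :
    x = ∑ μ : Eigenvalues (Matrix.toEuclideanLin A), eigProj A μ.val x := by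
  classical
  haveI : Fact (Matrix.toEuclideanLin A).IsSymmetric := ⟨hsym⟩
  set T := Matrix.toEuclideanLin A with hT
  set f : Eigenvalues T → EuclideanSpace ℝ n := fun μ =>
    ((DirectSum.decompose (fun μ : Eigenvalues T => eigenspace T μ) x μ : eigenspace T μ) :
      EuclideanSpace ℝ n) with hf
  have key : ∀ μ : Eigenvalues T, f μ = eigProj A μ.val x := by
    intro μ
    rw [hf]
    exact congrArg (Subtype.val : eigenspace T μ → EuclideanSpace ℝ n) (LinearMap.IsSymmetric.directSum_decompose_apply x μ)
  calc x = ∑ μ ∈ (DirectSum.decompose (fun μ : Eigenvalues T => eigenspace T μ) x).support, f μ :=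
        (DirectSum.sum_support_decompose _ x).symm
    _ = ∑ μ : Eigenvalues T, f μ := by
        refine Finset.sum_subset (Finset.subset_univ _) fun μ _ hμ => ?_
        rw [DFinsupp.notMem_support_iff] at hμ
        rw [hf]
        simp [hμ]
    _ = ∑ μ : Eigenvalues T, eigProj A μ.val x := Finset.sum_congr rfl fun μ _ => key μ

lemma pow_single_coord {V : Type*} [Fintype V] [DecidableEq V] (A : Matrix V V ℝ)
    (a b : V) (k : ℕ) :
    (((Matrix.toEuclideanLin A)^k) (EuclideanSpace.single a 1)) b = (A^k) b a := by
  induction k generalizing b with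
  | zero => simp [EuclideanSpace.single_apply, Matrix.one_apply, eq_comm]
  | succ k ih =>
    rw [pow_succ', Module.End.mul_apply]
    have : (Matrix.toEuclideanLin A) (((Matrix.toEuclideanLin A)^k) (EuclideanSpace.single a 1)) b
        = A.mulVec (fun c => (((Matrix.toEuclideanLin A)^k) (EuclideanSpace.single a 1)) c) b :=
      rfl
    rw [this]
    simp only [Matrix.mulVec, dotProduct]
    rw [pow_succ', Matrix.mul_apply]
    exact Finset.sum_congr rfl fun c _ => by rw [ih c]

lemma adj_pow_zero_of_lt_dist {V : Type*} [Fintype V] [DecidableEq V] (G : SimpleGraph V)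
    [DecidableRel G.Adj] (a b : V) (k : ℕ) (hk : k < G.dist b a) :
    (G.adjMatrix ℝ ^ k) b a = 0 := by
  rw [SimpleGraph.adjMatrix_pow_apply_eq_card_walk]
  have : Fintype.card { p : G.Walk b a | p.length = k } = 0 := by
    rw [Fintype.card_eq_zero_iff]
    constructor
    rintro ⟨p, hp⟩
    have hd := SimpleGraph.dist_le p
    simp only [Set.mem_setOf_eq] at hp
    omega
  rw [this, Nat.cast_zero]

lemma adj_pow_dist_pos {V : Type*} [Fintype V] [DecidableEq V] (G : SimpleGraph V)
    [DecidableRel G.Adj] (a b : V) (h : G.Reachable b a) :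
    0 < (G.adjMatrix ℝ ^ (G.dist b a)) b a := by
  rw [SimpleGraph.adjMatrix_pow_apply_eq_card_walk]
  have : 0 < Fintype.card { p : G.Walk b a | p.length = G.dist b a } := by
    rw [Fintype.card_pos_iff]
    obtain ⟨p, hp⟩ := h.exists_walk_length_eq_dist
    exact ⟨⟨p, hp⟩⟩
  exact_mod_cast this

open Module.End in
/-- For a connected finite simple graph `G` with adjacency matrix `A` and a vertex `a` of
eccentricity `ε_a`, one has `ε_a + 1 ≤ |Φ_a|`. -/
theorem eccentricity_lt_support_card {V : Type*} [Fintype V] [DecidableEq V]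
    (G : SimpleGraph V) [DecidableRel G.Adj] (hconn : G.Connected) (a : V)
    (ε : ℕ) (hε : ε = Finset.univ.sup (G.dist a)) :
    ε + 1 ≤ (eigSupport (G.adjMatrix ℝ) a).ncard := by
  classical
  set A := G.adjMatrix ℝ with hA
  set T := Matrix.toEuclideanLin A with hT
  have hsym : T.IsSymmetric := by
    rw [hT, ← Matrix.isHermitian_iff_isSymmetric, Matrix.IsHermitian,
      Matrix.conjTranspose_eq_transpose_of_trivial]
    exact G.transpose_adjMatrix
  set δ : EuclideanSpace ℝ V := EuclideanSpace.single a 1 with hδ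
  set Φ : Set ℝ := eigSupport A a with hΦ
  set v : ℕ → EuclideanSpace ℝ V := fun k => (T^k) δ with hv
  have hv_coord : ∀ k b, v k b = (A^k) b a := fun k b => pow_single_coord A a b k
  -- decomposition of v k
  have hdec : δ = ∑ μ : Eigenvalues T, eigProj A μ.val δ := spectral_sum A hsym δ
  have hvdec : ∀ k, v k = ∑ μ : Eigenvalues T, (μ.val)^k • eigProj A μ.val δ := by
    intro k
    have hstep : v k = (T^k) (∑ μ : Eigenvalues T, eigProj A μ.val δ) := by rw [← hdec]
    rw [hstep, map_sum]
    refine Finset.sum_congr rfl fun μ _ => ?_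
    exact eigProj_pow_apply A μ.val _ k (Submodule.orthogonalProjectionOnto _ δ).2
  -- the span
  set W : Submodule ℝ (EuclideanSpace ℝ V) :=
    Submodule.span ℝ ((fun μ => eigProj A μ δ) '' Φ) with hW
  have hvW : ∀ k, v k ∈ W := by
    intro k
    rw [hvdec k]
    refine Submodule.sum_mem _ fun μ _ => ?_
    by_cases h0 : eigProj A μ.val δ = 0
    · rw [h0, smul_zero]; exact W.zero_mem
    · exact Submodule.smul_mem _ _ (Submodule.subset_span ⟨μ.val, h0, rfl⟩)
  -- vertices at all distances ≤ ε
  have hne : Nonempty V := hconn.nonempty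
  obtain ⟨b0, -, hb0⟩ := Finset.exists_mem_eq_sup Finset.univ Finset.univ_nonempty (G.dist a)
  have hdist : ∀ t ≤ ε, ∃ b, G.dist a b = t := by
    intro t ht
    obtain ⟨p, hp⟩ := hconn.exists_walk_length_eq_dist a b0
    have hpl : p.length = ε := by rw [hp, hε, hb0]
    obtain ⟨c, q, r, hq, hr⟩ := walk_split p t (by omega)
    refine ⟨c, le_antisymm (hq ▸ SimpleGraph.dist_le q) ?_⟩
    have h1 : G.dist a b0 ≤ G.dist a c + G.dist c b0 := hconn.dist_triangle
    have h2 : G.dist c b0 ≤ ε - t := by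
      have := SimpleGraph.dist_le r
      omega
    have h3 : G.dist a b0 = ε := by rw [hε, hb0]
    omega
  -- linear independence
  have li : LinearIndependent ℝ (fun k : Fin (ε+1) => v k) := by
    rw [Fintype.linearIndependent_iff]
    intro g hg
    by_contra hex
    push_neg at hex
    obtain ⟨i0, hi0⟩ := hex
    set S : Finset (Fin (ε+1)) := Finset.univ.filter (fun i => g i ≠ 0) with hS
    have hSne : S.Nonempty := ⟨i0, by simp [hS, hi0]⟩
    set t := S.max' hSne with htdef
    have htS : t ∈ S := S.max'_mem hSne
    have hgt : g t ≠ 0 := by simpa [hS] using htS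
    have hmax : ∀ i ∈ S, i ≤ t := fun i hi => S.le_max' i hi
    obtain ⟨b, hb⟩ := hdist t.val (by omega)
    have happ : (∑ i : Fin (ε+1), g i • v i) b = ∑ i : Fin (ε+1), g i * v i b := by
      rw [WithLp.ofLp_sum, Finset.sum_apply]
      exact Finset.sum_congr rfl fun i _ => rfl
    have hsum : ∑ i : Fin (ε+1), g i * v i b = 0 := by
      rw [← happ, hg]
      rfl
    have hone : ∑ i : Fin (ε+1), g i * v i b = g t * v t b := by
      refine Finset.sum_eq_single t (fun i _ hne => ?_) (fun h => absurd (Finset.mem_univ t) h)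
      by_cases hgi : g i = 0
      · rw [hgi, zero_mul]
      · have hiS : i ∈ S := by simp [hS, hgi]
        have hilt : (i : ℕ) < t.val := by
          have := hmax i hiS
          have : i ≠ t := hne
          omega
        have : v i b = 0 := by
          rw [hv_coord]
          exact adj_pow_zero_of_lt_dist G a b i (by rw [SimpleGraph.dist_comm, hb]; omega)
        rw [this, mul_zero]
    have hpos : 0 < v t b := by
      rw [hv_coord]
      have : G.dist b a = t.val := by rw [SimpleGraph.dist_comm, hb]
      rw [← this]
      exact adj_pow_dist_pos G a b (hconn b a)
    rw [hone] at hsum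
    exact hgt (by
      rcases mul_eq_zero.mp hsum with h | h
      · exact h
      · exact absurd h (ne_of_gt hpos))
  have li' : LinearIndependent ℝ (fun k : Fin (ε+1) => (⟨v k, hvW k⟩ : W)) := by
    apply LinearIndependent.of_comp W.subtype
    exact li
  have h1 : ε + 1 ≤ Module.finrank ℝ W := by
    simpa using li'.fintype_card_le_finrank
  -- Φ is finite
  have hΦsub : Φ ⊆ Set.range (Eigenvalues.val T) := by
    intro μ hμ
    have hne : eigenspace T μ ≠ ⊥ := by
      intro hbot
      apply hμ
      have hmem : eigProj A μ δ ∈ eigenspace T μ :=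
        (Submodule.orthogonalProjectionOnto (eigenspace T μ) δ).2
      rw [hbot, Submodule.mem_bot] at hmem
      exact hmem
    exact ⟨⟨μ, hne⟩, rfl⟩
  have hΦfin : Φ.Finite := Set.Finite.subset (Set.finite_range _) hΦsub
  -- finrank bound
  have h2 : Module.finrank ℝ W ≤ Φ.ncard := by
    have himg : ((fun μ => eigProj A μ δ) '' Φ) =
        ↑(hΦfin.toFinset.image (fun μ => eigProj A μ δ)) := by
      rw [Finset.coe_image, Set.Finite.coe_toFinset]
    calc Module.finrank ℝ W ≤ (hΦfin.toFinset.image (fun μ => eigProj A μ δ)).card := by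
          rw [hW, himg]
          exact finrank_span_finset_le_card _
      _ ≤ hΦfin.toFinset.card := Finset.card_image_le
      _ = Φ.ncard := (Set.ncard_eq_toFinset_card Φ hΦfin).symm
  omega
end

section
/- Let A be a real symmetric N × N matrix and let a, b be indices with |(exp(−i t₀ A))_{b,a}| = 1 for some t₀ > 0. Then |(exp(−i 2t₀ A))_{a,a}| = 1 and |(exp(−i 2t₀ A))_{b,b}| = 1; that is, perfect state transfer at time t₀ implies perfect revival at both the input and output sites at time 2t₀. -/
open Matrix

/-- Column lemma: if `Vᴴ * V = 1` and `|V c d|² = 1`, then all other entries of column `d`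
vanish. -/
lemma col_entries_zero {N : Type*} [Fintype N] [DecidableEq N]
    (V : Matrix N N ℂ) (hV : Vᴴ * V = 1) (c d : N) (hcd : Complex.normSq (V c d) = 1) :
    ∀ k, k ≠ c → V k d = 0 := by
  have h1 : (∑ k, Complex.normSq (V k d)) = 1 := by
    have := congrFun (congrFun hV d) d
    simp only [Matrix.mul_apply, Matrix.conjTranspose_apply, Matrix.one_apply_eq] at this
    have hre := congrArg Complex.re this
    simpa [Complex.normSq_apply, Complex.mul_re] using hre
  have h2 : (∑ k ∈ Finset.univ.erase c, Complex.normSq (V k d)) = 0 := by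
    rw [← Finset.add_sum_erase Finset.univ (fun k => Complex.normSq (V k d))
      (Finset.mem_univ c)] at h1
    linarith
  intro k hk
  have hz : Complex.normSq (V k d) = 0 := by
    have := (Finset.sum_eq_zero_iff_of_nonneg (fun i _ => Complex.normSq_nonneg (V i d))).mp h2
    exact this k (Finset.mem_erase.mpr ⟨hk, Finset.mem_univ k⟩)
  exact Complex.normSq_eq_zero.mp hz

/-- **Perfect state transfer implies perfect revival.** If a real symmetric matrix `A` has
perfect state transfer from `a` to `b` at time `t₀ > 0`, then there are perfect revivals at
both `a` and `b` at time `2t₀`. -/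
theorem pst_implies_revival {N : Type*} [Fintype N] [DecidableEq N]
    (A : Matrix N N ℝ) (hA : A.IsSymm) (a b : N) (t₀ : ℝ) (ht₀ : 0 < t₀)
    (hPST : ‖
      (NormedSpace.exp ((-Complex.I * t₀) • A.map (Complex.ofReal ·)) b a)‖ = 1) :
    ‖
      (NormedSpace.exp ((-Complex.I * (2 * t₀)) • A.map (Complex.ofReal ·)) a a)‖ = 1 ∧
    ‖
      (NormedSpace.exp ((-Complex.I * (2 * t₀)) • A.map (Complex.ofReal ·)) b b)‖ = 1 := by
  set M : Matrix N N ℂ := A.map (Complex.ofReal ·) with hM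
  set U : Matrix N N ℂ := NormedSpace.exp ((-Complex.I * t₀) • M) with hU
  -- M is symmetric
  have hMT : Mᵀ = M := by
    ext i j
    simp [hM, Matrix.transpose_apply, Matrix.map_apply, hA.apply i j]
  -- M is Hermitian (real entries)
  have hMH : Mᴴ = M := by
    ext i j
    simp [hM, Matrix.conjTranspose_apply, Matrix.map_apply, hA.apply i j]
  -- U is symmetric
  have hUsymm : ∀ i j, U j i = U i j := by
    have h : ((-Complex.I * t₀) • M).IsSymm := by
      unfold Matrix.IsSymm
      rw [Matrix.transpose_smul, hMT]
    have := Matrix.IsSymm.exp h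
    intro i j
    exact this.apply i j
  -- conjugate transpose of the exponent is its negative
  have hskew : ((-Complex.I * t₀) • M)ᴴ = -((-Complex.I * t₀) • M) := by
    rw [Matrix.conjTranspose_smul, hMH, ← neg_smul]
    congr 1
    simp [Complex.ext_iff]
  -- unitarity
  have hUH : Uᴴ = NormedSpace.exp (-((-Complex.I * t₀) • M)) := by
    rw [hU, ← Matrix.exp_conjTranspose, hskew]
  have hUnit : Uᴴ * U = 1 := by
    rw [hUH, hU,
      ← Matrix.exp_add_of_commute (-((-Complex.I * (t₀ : ℂ)) • M)) ((-Complex.I * (t₀ : ℂ)) • M)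
        (Commute.neg_left (Commute.refl _)),
      neg_add_cancel]
    exact NormedSpace.exp_zero
  -- normSq of the PST entry is 1
  have hba : Complex.normSq (U b a) = 1 := by
    have := Complex.sq_norm (U b a)
    rw [hPST] at this
    simpa using this.symm
  have hab : Complex.normSq (U a b) = 1 := by rw [← hUsymm a b]; exact hba
  -- vanishing of other entries of column a and column b
  have hcolA : ∀ k, k ≠ b → U k a = 0 := col_entries_zero U hUnit b a hba
  have hcolB : ∀ k, k ≠ a → U k b = 0 := col_entries_zero U hUnit a b hab
  -- exp at 2t₀ is U * U
  have hexp2 : NormedSpace.exp ((-Complex.I * (2 * t₀)) • M) = U * U := by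
    have harg : (-Complex.I * (2 * t₀)) • M
        = (-Complex.I * t₀) • M + (-Complex.I * t₀) • M := by
      rw [← add_smul]; ring_nf
    rw [harg, Matrix.exp_add_of_commute _ _ (Commute.refl _)]
  constructor
  · rw [hexp2, Matrix.mul_apply,
      Finset.sum_eq_single b (fun k _ hk => by rw [hcolA k hk, mul_zero])
        (fun h => absurd (Finset.mem_univ b) h),
      ← hUsymm a b, norm_mul, hPST, mul_one]
  · rw [hexp2, Matrix.mul_apply,
      Finset.sum_eq_single a (fun k _ hk => by rw [hcolB k hk, mul_zero])
        (fun h => absurd (Finset.mem_univ a) h),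
      ← hUsymm a b, norm_mul, hPST, mul_one]
end

section
/- Let A be a real symmetric N × N matrix and let a, b be indices with |(exp(−i t₀ A))_{b,a}| = 1 for some t₀ > 0 (perfect state transfer). Then for every eigenvalue λ of A there exists a sign σ_λ ∈ {+1, −1} such that E_λ δ_b = σ_λ E_λ δ_a, where E_λ is the orthogonal projection onto the λ-eigenspace (strong cospectrality of a and b). In particular Φ_a = Φ_b. -/
set_option maxHeartbeats 1000000


open Matrix
open scoped Nat

lemma exp_mulVec_eigen {n : Type*} [Fintype n] [DecidableEq n] (B : Matrix n n ℂ)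
    (v : n → ℂ) (c : ℂ) (h : B *ᵥ v = c • v) :
    NormedSpace.exp B *ᵥ v = Complex.exp c • v := by
  letI : NormedRing (Matrix n n ℂ) := Matrix.linftyOpNormedRing
  letI : NormedAlgebra ℂ (Matrix n n ℂ) := Matrix.linftyOpNormedAlgebra
  have hpow : ∀ k : ℕ, B ^ k *ᵥ v = c ^ k • v := by
    intro k
    induction k with
    | zero => simp
    | succ k ih =>
      rw [pow_succ, ← Matrix.mulVec_mulVec, h, Matrix.mulVec_smul, ih, smul_smul,
        pow_succ, mul_comm]
  let L : Matrix n n ℂ →ₗ[ℂ] (n → ℂ) :=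
    { toFun := fun C => C *ᵥ v
      map_add' := fun C D => Matrix.add_mulVec C D v
      map_smul' := fun t C => Matrix.smul_mulVec t C v }
  have hsum : Summable fun k : ℕ => (k !⁻¹ : ℂ) • B ^ k := NormedSpace.expSeries_summable' B
  have h1 : NormedSpace.exp B *ᵥ v = ∑' k : ℕ, ((k !⁻¹ : ℂ) • B ^ k) *ᵥ v := by
    rw [NormedSpace.exp_eq_tsum ℂ]
    exact (L.toContinuousLinearMap.map_tsum hsum :)
  have h2 : ∀ k : ℕ, ((k !⁻¹ : ℂ) • B ^ k) *ᵥ v = ((k !⁻¹ : ℂ) * c ^ k) • v := by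
    intro k; rw [Matrix.smul_mulVec, hpow, smul_smul]
  have hsc : Summable fun k : ℕ => (k !⁻¹ : ℂ) * c ^ k := by
    simpa [smul_eq_mul] using NormedSpace.expSeries_summable' (𝕂 := ℂ) (𝔸 := ℂ) c
  rw [h1]
  simp_rw [h2]
  rw [Summable.tsum_smul_const hsc]
  congr 1
  rw [Complex.exp_eq_exp_ℂ, NormedSpace.exp_eq_tsum ℂ]
  simp [smul_eq_mul]

/-- **Perfect state transfer implies strong cospectrality.** If a real symmetric matrix `A`
has perfect state transfer from `a` to `b` at time `t₀ > 0`, then for every eigenvalue `μ`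
of `A` there is a sign `σ ∈ {+1, −1}` with `E_μ δ_b = σ • E_μ δ_a`; in particular
`Φ_a = Φ_b`. -/
theorem pst_implies_strong_cospectrality {N : Type*} [Fintype N] [DecidableEq N]
    (A : Matrix N N ℝ) (hA : A.IsSymm) (a b : N) (t₀ : ℝ) (ht₀ : 0 < t₀)
    (hPST : ‖
      (NormedSpace.exp ((-Complex.I * t₀) • A.map (Complex.ofReal ·)) b a)‖ = 1) :
    (∀ μ : ℝ, Module.End.HasEigenvalue (Matrix.toEuclideanLin A) μ →
      ∃ σ : ℝ, (σ = 1 ∨ σ = -1) ∧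
        eigProj A μ (EuclideanSpace.single b 1) = σ • eigProj A μ (EuclideanSpace.single a 1)) ∧
    eigSupport A a = eigSupport A b := by
    classical
  letI : NormedRing (Matrix N N ℂ) := Matrix.linftyOpNormedRing
  letI : NormedAlgebra ℂ (Matrix N N ℂ) := Matrix.linftyOpNormedAlgebra
  set Aℂ : Matrix N N ℂ := A.map (Complex.ofReal ·) with hAc
  set M : Matrix N N ℂ := (-Complex.I * t₀) • Aℂ with hMdef
  set U : Matrix N N ℂ := NormedSpace.exp M with hUdef
  -- basic symmetry facts
  have hAcH : Aℂᴴ = Aℂ := by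
    ext i j
    simp only [Matrix.conjTranspose_apply, Matrix.map_apply, hAc, Complex.star_def,
      Complex.conj_ofReal]
    exact congrArg _ (hA.apply i j)
  have hMsymm : M.IsSymm := by
    rw [Matrix.IsSymm, hMdef, Matrix.transpose_smul, (hA.map _).eq]
  have hMH : Mᴴ = -M := by
    rw [hMdef, Matrix.conjTranspose_smul, hAcH, ← neg_smul]
    congr 1
    simp [Complex.star_def]
  have hUT : Uᵀ = U := hMsymm.exp.eq
  have hUU : Uᴴ * U = 1 := by
    rw [hUdef, ← Matrix.exp_conjTranspose, hMH,
      ← Matrix.exp_add_of_commute (-M) M (Commute.neg_left (Commute.refl M)), neg_add_cancel,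
      NormedSpace.exp_zero]
  -- the PST entry
  have hc : ‖U b a‖ = 1 := hPST
  have hcne : U b a ≠ 0 := by
    intro h0; rw [h0] at hc; simp at hc
  -- column structure: U x a = 0 for x ≠ b
  have hcol : ∀ x, x ≠ b → U x a = 0 := by
    have hsum1 : ∑ x, Complex.normSq (U x a) = 1 := by
      have h := congrFun (congrFun hUU a) a
      rw [Matrix.mul_apply, Matrix.one_apply_eq] at h
      have h' : ∑ x, (Complex.normSq (U x a) : ℂ) = 1 := by
        rw [← h]
        refine Finset.sum_congr rfl fun x _ => ?_
        rw [Matrix.conjTranspose_apply, Complex.star_def, ← Complex.normSq_eq_conj_mul_self]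
      exact_mod_cast h'
    have hb1 : Complex.normSq (U b a) = 1 := by
      rw [← Complex.sq_norm, hc]; norm_num
    have h0 : ∑ x ∈ Finset.univ.erase b, Complex.normSq (U x a) = 0 := by
      have h2 := Finset.add_sum_erase Finset.univ (fun x => Complex.normSq (U x a))
        (Finset.mem_univ b)
      beta_reduce at h2
      rw [hsum1, hb1] at h2
      linarith
    intro x hx
    have hmem : x ∈ Finset.univ.erase b := Finset.mem_erase.mpr ⟨hx, Finset.mem_univ x⟩
    have := (Finset.sum_eq_zero_iff_of_nonneg
      (fun y _ => Complex.normSq_nonneg (U y a))).mp h0 x hmem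
    exact Complex.normSq_eq_zero.mp this
  -- key scalar relation for eigenvectors
  have hkey : ∀ (μ : ℝ) (w : EuclideanSpace ℝ N),
      w ∈ Module.End.eigenspace (Matrix.toEuclideanLin A) μ →
      ((w b : ℝ) : ℂ) * U b a = Complex.exp (-Complex.I * t₀ * μ) * ((w a : ℝ) : ℂ) := by
    intro μ w hw
    rw [Module.End.mem_eigenspace_iff] at hw
    set w' : N → ℝ := (WithLp.equiv 2 (N → ℝ)) w with hw'def
    have hw' : A *ᵥ w' = μ • w' := by
      have := congrArg (WithLp.equiv 2 (N → ℝ)) hw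
      exact this
    set wc : N → ℂ := fun i => ((w' i : ℝ) : ℂ) with hwc
    have hAcm : Aℂ *ᵥ wc = (μ : ℂ) • wc := by
      funext i
      have := congrFun hw' i
      simp only [Matrix.mulVec, dotProduct, Pi.smul_apply, smul_eq_mul] at this ⊢
      simp only [hAc, Matrix.map_apply, hwc]
      push_cast
      exact_mod_cast congrArg (Complex.ofReal) this
    have hMm : M *ᵥ wc = (-Complex.I * t₀ * μ) • wc := by
      rw [hMdef, Matrix.smul_mulVec, hAcm, smul_smul]
    have hUm : U *ᵥ wc = Complex.exp (-Complex.I * t₀ * μ) • wc := by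
      rw [hUdef]; exact exp_mulVec_eigen M wc _ hMm
    have lhs : wc ⬝ᵥ (U *ᵥ Pi.single a 1) = wc b * U b a := by
      rw [Matrix.mulVec_single_one, dotProduct]; simp only [Matrix.col_apply]
      rw [Finset.sum_eq_single b]
      · intro x _ hx; rw [hcol x hx]; ring
      · intro hbx; exact absurd (Finset.mem_univ b) hbx
    have rhs : wc ⬝ᵥ (U *ᵥ Pi.single a 1) = Complex.exp (-Complex.I * t₀ * μ) * wc a := by
      rw [dotProduct_mulVec, ← Matrix.mulVec_transpose, hUT, hUm,
        smul_dotProduct, dotProduct_single]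
      simp [smul_eq_mul]
    have : wc b * U b a = Complex.exp (-Complex.I * t₀ * μ) * wc a := by
      rw [← lhs, rhs]
    exact this
  -- the main per-eigenvalue statement
  have main : ∀ μ : ℝ, ∃ σ : ℝ, (σ = 1 ∨ σ = -1) ∧
      eigProj A μ (EuclideanSpace.single b 1) = σ • eigProj A μ (EuclideanSpace.single a 1) := by
    intro μ
    set K := Module.End.eigenspace (Matrix.toEuclideanLin A) μ with hK
    set e := Complex.exp (-Complex.I * t₀ * μ) with he
    have habse : ‖e‖ = 1 := by
      rw [he, Complex.norm_exp]
      norm_num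
    have hrel : ∀ w ∈ K, ((w b : ℝ) : ℂ) = (e / U b a) * ((w a : ℝ) : ℂ) := by
      intro w hwK
      have h := hkey μ w hwK
      field_simp
      linear_combination h
    obtain ⟨σ, hσpm, hσ⟩ : ∃ σ : ℝ, (σ = 1 ∨ σ = -1) ∧ ∀ w ∈ K, (w b : ℝ) = σ * (w a : ℝ) := by
      by_cases hex : ∃ w ∈ K, (w a : ℝ) ≠ 0
      · obtain ⟨w0, hw0K, hw0a⟩ := hex
        have hw0a' : ((w0 a : ℝ) : ℂ) ≠ 0 := Complex.ofReal_ne_zero.mpr hw0a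
        have hr : (e / U b a) = (((w0 b / w0 a : ℝ)) : ℂ) := by
          have h := hkey μ w0 hw0K
          push_cast
          rw [div_eq_div_iff hcne hw0a']
          linear_combination -h
        refine ⟨w0 b / w0 a, ?_, ?_⟩
        · have habsr : ‖e / U b a‖ = 1 := by
            rw [norm_div, habse, hc]; norm_num
          rw [hr, Complex.norm_real, Real.norm_eq_abs] at habsr
          exact (abs_eq (by norm_num : (0:ℝ) ≤ 1)).mp habsr
        · intro w hwK
          have h1 := hrel w hwK
          rw [hr] at h1
          exact_mod_cast h1
      · push_neg at hex
        refine ⟨1, Or.inl rfl, fun w hwK => ?_⟩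
        have h1 := hrel w hwK
        rw [hex w hwK] at h1 ⊢
        push_cast at h1
        simp at h1
        simp [h1]
    refine ⟨σ, hσpm, ?_⟩
    have hmem : (EuclideanSpace.single b 1 - σ • EuclideanSpace.single a 1 :
        EuclideanSpace ℝ N) ∈ Kᗮ := by
      rw [Submodule.mem_orthogonal]
      intro u huK
      rw [inner_sub_right, inner_smul_right, EuclideanSpace.inner_single_right,
        EuclideanSpace.inner_single_right]
      simp only [one_mul, _root_.map_one, RCLike.star_def]
      have := hσ u huK
      simp only [starRingEnd_apply, star_trivial]
      rw [this]; ring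
    have hz : Submodule.orthogonalProjectionOnto K
        (EuclideanSpace.single b 1 - σ • EuclideanSpace.single a 1) = 0 :=
      Submodule.orthogonalProjectionOnto_eq_zero_iff.mpr hmem
    have hz' := congrArg (Subtype.val) hz
    rw [map_sub, _root_.map_smul] at hz'
    simp only [Submodule.coe_sub, Submodule.coe_smul, ZeroMemClass.coe_zero] at hz'
    rw [sub_eq_zero] at hz'
    exact hz'
  refine ⟨fun μ _ => main μ, ?_⟩
  ext μ
  obtain ⟨σ, hσpm, hσ⟩ := main μ
  have hσne : σ ≠ 0 := by rcases hσpm with h | h <;> rw [h] <;> norm_num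
  simp only [eigSupport, Set.mem_setOf_eq, hσ]
  simp [smul_eq_zero, hσne, sub_eq_zero]
end

section
/- Let A be a real symmetric N × N matrix and a an index. Suppose there exist integers α, Δ ≥ 1 and, for each λ ∈ Φ_a, an integer β_λ, all β_λ of the same parity, such that λ = (α + β_λ √Δ)/2 for every λ ∈ Φ_a. Then a has a perfect revival at time 2π/√Δ: |(exp(−i (2π/√Δ) A))_{a,a}| = 1. -/
open Matrix

/-- If `v` is a complex eigenvector of the complexification of `A` with real eigenvalue `μ`
and `v a ≠ 0`, then `μ ∈ eigSupport A a`. -/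
lemma mem_eigSupport_of_eigvec {n : Type*} [Fintype n] [DecidableEq n] (A : Matrix n n ℝ)
    (a : n) (μ : ℝ) (v : n → ℂ) (hv : A.map (Complex.ofReal ·) *ᵥ v = (μ : ℂ) • v)
    (hva : v a ≠ 0) : μ ∈ eigSupport A a := by
  intro h0
  have h0' : Submodule.orthogonalProjectionOnto (Module.End.eigenspace (Matrix.toEuclideanLin A) μ)
      (EuclideanSpace.single a 1) = 0 := by
    exact Submodule.coe_eq_zero.mp h0
  rw [Submodule.orthogonalProjectionOnto_eq_zero_iff] at h0'
  have hre : A *ᵥ (fun i => (v i).re) = μ • (fun i => (v i).re) := by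
    funext i
    have := congrArg (fun w => (w i).re) hv
    simpa [Matrix.mulVec, dotProduct, Complex.re_sum, Matrix.map_apply] using this
  have him : A *ᵥ (fun i => (v i).im) = μ • (fun i => (v i).im) := by
    funext i
    have := congrArg (fun w => (w i).im) hv
    simpa [Matrix.mulVec, dotProduct, Complex.im_sum, Matrix.map_apply] using this
  have key : ∀ w : n → ℝ, A *ᵥ w = μ • w → w a = 0 := by
    intro w hw
    have hmem : (WithLp.equiv 2 (n → ℝ)).symm w ∈
        Module.End.eigenspace (Matrix.toEuclideanLin A) μ := by
      rw [Module.End.mem_eigenspace_iff]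
      rw [WithLp.equiv_symm_apply, Matrix.toEuclideanLin_apply_piLp_toLp, hw]
      rfl
    have hz := h0' _ hmem
    have h1 : (inner ℝ ((WithLp.equiv 2 (n → ℝ)).symm w) (EuclideanSpace.single a 1) : ℝ)
        = w a := by
      rw [real_inner_comm]
      simp [EuclideanSpace.inner_single_left]
    rw [hz] at h1
    exact h1.symm
  exact hva (Complex.ext (key _ hre) (key _ him))

/-- Entrywise formula for the exponential of a scalar multiple of a Hermitian matrix. -/
lemma exp_smul_hermitian_apply {n : Type*} [Fintype n] [DecidableEq n]
    (B : Matrix n n ℂ) (hB : B.IsHermitian) (s : ℂ) (a b : n) :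
    NormedSpace.exp (s • B) a b =
      ∑ i, Complex.exp (s * hB.eigenvalues i) *
        (hB.eigenvectorBasis i a * (starRingEnd ℂ) (hB.eigenvectorBasis i b)) := by
  set U : Matrix n n ℂ := (hB.eigenvectorUnitary : Matrix n n ℂ)
  have hUU : U * star U = 1 := mem_unitaryGroup_iff.mp hB.eigenvectorUnitary.2
  have hUinv : U⁻¹ = star U := inv_eq_right_inv hUU
  have hUunit : IsUnit U := by
    have : Invertible U := invertibleOfRightInverse U (star U) hUU
    exact isUnit_of_invertible U
  have hdiag : s • B = U * (s • diagonal (Complex.ofReal ∘ hB.eigenvalues)) * U⁻¹ := by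
    rw [hUinv]
    conv_lhs => rw [hB.spectral_theorem]
    rw [Unitary.conjStarAlgAut_apply, ← Matrix.smul_mul, ← Matrix.mul_smul]
    rfl
  rw [hdiag, Matrix.exp_conj U _ hUunit, hUinv]
  have hd : NormedSpace.exp (s • diagonal (Complex.ofReal ∘ hB.eigenvalues)) =
      diagonal (fun i => Complex.exp (s * hB.eigenvalues i)) := by
    rw [← Matrix.diagonal_smul, Matrix.exp_diagonal]
    have hvec : (NormedSpace.exp (s • (Complex.ofReal ∘ hB.eigenvalues)))
        = fun i => Complex.exp (s * hB.eigenvalues i) := by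
      funext i
      rw [Pi.coe_exp]
      simp [← Complex.exp_eq_exp_ℂ]
    rw [hvec]
  rw [hd]
  rw [Matrix.mul_apply]
  congr 1
  funext i
  rw [Matrix.mul_diagonal]
  simp [Matrix.star_apply, U, Matrix.IsHermitian.eigenvectorUnitary_apply]
  ring

/-- If the eigenvalues in `Φ_a` take the form `λ = (α + β_λ √Δ)/2` with `α, β_λ ∈ ℤ`,
`Δ ≥ 1` an integer, and all `β_λ` of the same parity, then `a` has a perfect revival at
time `2π/√Δ`. -/
theorem revival_of_eigenvalue_form {N : Type*} [Fintype N] [DecidableEq N]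
    (A : Matrix N N ℝ) (hA : A.IsSymm) (a : N)
    (α : ℤ) (Δ : ℕ) (hΔ : 1 ≤ Δ) (β : ℝ → ℤ)
    (hform : ∀ μ ∈ eigSupport A a, μ = ((α : ℝ) + (β μ : ℝ) * Real.sqrt Δ) / 2)
    (hpar : ∀ μ ∈ eigSupport A a, ∀ ν ∈ eigSupport A a, (2 : ℤ) ∣ β μ - β ν) :
    ‖
      (NormedSpace.exp
        ((-Complex.I * (2 * Real.pi / Real.sqrt Δ)) • A.map (Complex.ofReal ·)) a a)‖ = 1 := by
  have hB : (A.map (Complex.ofReal ·)).IsHermitian := by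
    ext i j
    simp [Matrix.conjTranspose_apply, Matrix.map_apply, hA.apply]
  set s : ℂ := -Complex.I * (2 * Real.pi / Real.sqrt Δ) with hs
  rw [exp_smul_hermitian_apply _ hB s a a]
  set v : N → ℂ := fun i => hB.eigenvectorBasis i a with hvdef
  -- the row of the eigenvector unitary has norm 1
  have hsum1 : ∑ i, v i * (starRingEnd ℂ) (v i) = 1 := by
    have hUU : (hB.eigenvectorUnitary : Matrix N N ℂ) *
        star (hB.eigenvectorUnitary : Matrix N N ℂ) = 1 :=
      mem_unitaryGroup_iff.mp hB.eigenvectorUnitary.2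
    have := congrFun (congrFun hUU a) a
    simpa [Matrix.mul_apply, Matrix.star_apply, Matrix.one_apply,
      Matrix.IsHermitian.eigenvectorUnitary_apply, hvdef] using this
  -- eigenvalues with nonvanishing coefficient are in the support
  have hmem : ∀ i, v i ≠ 0 → hB.eigenvalues i ∈ eigSupport A a := by
    intro i hi
    refine mem_eigSupport_of_eigvec A a (hB.eigenvalues i) (hB.eigenvectorBasis i) ?_ hi
    funext j
    have h1 := congrFun (hB.mulVec_eigenvectorBasis i) j
    simpa [Complex.real_smul] using h1
  -- a nonvanishing coefficient exists
  have hex : ∃ i, v i ≠ 0 := by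
    by_contra h
    push_neg at h
    have : ∑ i, v i * (starRingEnd ℂ) (v i) = 0 :=
      Finset.sum_eq_zero (fun i _ => by rw [h i]; ring)
    rw [this] at hsum1
    exact zero_ne_one hsum1
  obtain ⟨i₀, hi₀⟩ := hex
  have hsqrt : (0:ℝ) < Real.sqrt Δ := Real.sqrt_pos.mpr (by exact_mod_cast hΔ)
  have hsqrtC : (Real.sqrt Δ : ℂ) ≠ 0 := by exact_mod_cast hsqrt.ne'
  -- all phases agree
  have hphase : ∀ i, v i ≠ 0 →
      Complex.exp (s * hB.eigenvalues i) = Complex.exp (s * hB.eigenvalues i₀) := by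
    intro i hi
    have hμi := hmem i hi
    have hμ0 := hmem i₀ hi₀
    obtain ⟨k, hk⟩ := hpar _ hμi _ hμ0
    have e1 : ((hB.eigenvalues i : ℝ) : ℂ)
        = ((α:ℂ) + (β (hB.eigenvalues i) : ℂ) * (Real.sqrt Δ : ℂ)) / 2 := by
      exact_mod_cast congrArg Complex.ofReal (hform _ hμi)
    have e2 : ((hB.eigenvalues i₀ : ℝ) : ℂ)
        = ((α:ℂ) + (β (hB.eigenvalues i₀) : ℂ) * (Real.sqrt Δ : ℂ)) / 2 := by
      exact_mod_cast congrArg Complex.ofReal (hform _ hμ0)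
    have hkc : (β (hB.eigenvalues i) : ℂ) = (β (hB.eigenvalues i₀) : ℂ) + 2 * (k:ℂ) := by
      have : β (hB.eigenvalues i) = β (hB.eigenvalues i₀) + 2 * k := by omega
      exact_mod_cast congrArg (Int.cast : ℤ → ℂ) this
    rw [Complex.exp_eq_exp_iff_exists_int]
    refine ⟨-k, ?_⟩
    rw [e1, e2, hkc, hs]
    push_cast
    field_simp
    ring
  -- collapse the sum
  have hcol : ∑ i, Complex.exp (s * hB.eigenvalues i) * (v i * (starRingEnd ℂ) (v i))
      = Complex.exp (s * hB.eigenvalues i₀) * ∑ i, v i * (starRingEnd ℂ) (v i) := by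
    rw [Finset.mul_sum]
    refine Finset.sum_congr rfl (fun i _ => ?_)
    by_cases h : v i = 0
    · rw [h]; ring
    · rw [hphase i h]
  rw [hcol, hsum1, mul_one]
  have harg : s * hB.eigenvalues i₀
      = ((-(2 * Real.pi / Real.sqrt Δ) * hB.eigenvalues i₀ : ℝ) : ℂ) * Complex.I := by
    rw [hs]; push_cast; ring
  rw [harg, Complex.norm_exp_ofReal_mul_I]
end

section
/- Let A be a real symmetric N × N matrix and a, b indices. Suppose there exist integers α, Δ ≥ 1 and, for each λ ∈ Φ_a, an integer β_λ such that λ = (α + β_λ √Δ)/2 and every (β_λ − β_μ)/2 is an integer. Suppose moreover that for each λ ∈ Φ_a there is σ_λ ∈ {+1, −1} with E_λ δ_b = σ_λ E_λ δ_a, that E_λ δ_b = 0 for every eigenvalue λ ∉ Φ_a, and that σ_λ σ_μ = (−1)^{(β_λ − β_μ)/2} for all λ, μ ∈ Φ_a. Then for every odd positive integer j, |(exp(−i (jπ/√Δ) A))_{b,a}| = 1 (perfect state transfer at all odd multiples of π/√Δ), and for every even positive integer j, |(exp(−i (jπ/√Δ) A))_{a,a}| = 1 (perfect revival at all even multiples).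 -/
open Matrix

open NormedSpace in
lemma exp_mulVec_eigenvector' {N : Type*} [Fintype N] [DecidableEq N]
    (M : Matrix N N ℂ) (μ : ℂ) (w : N → ℂ) (hw : M *ᵥ w = μ • w) :
    exp M *ᵥ w = Complex.exp μ • w := by
  letI : SeminormedRing (Matrix N N ℂ) := Matrix.linftyOpSemiNormedRing
  letI : NormedRing (Matrix N N ℂ) := Matrix.linftyOpNormedRing
  letI : NormedAlgebra ℂ (Matrix N N ℂ) := Matrix.linftyOpNormedAlgebra
  have hpow : ∀ n : ℕ, M ^ n *ᵥ w = μ ^ n • w := by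
    intro n
    induction n with
    | zero => simp
    | succ n ih =>
        rw [pow_succ, ← Matrix.mulVec_mulVec, hw, Matrix.mulVec_smul, ih, pow_succ,
          smul_smul, mul_comm]
  let L : Matrix N N ℂ →ₗ[ℂ] (N → ℂ) :=
    { toFun := fun X => X *ᵥ w
      map_add' := fun X Y => Matrix.add_mulVec X Y w
      map_smul' := fun c X => Matrix.smul_mulVec c X w }
  let Lc : Matrix N N ℂ →L[ℂ] (N → ℂ) := LinearMap.toContinuousLinearMap L
  have h1 : exp M *ᵥ w = Lc (exp M) := rfl
  rw [h1, exp_eq_tsum ℂ]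
  rw [Lc.map_tsum (NormedSpace.expSeries_summable' (𝕂 := ℂ) M)]
  have h2 : ∀ n : ℕ, Lc (((n.factorial : ℂ))⁻¹ • M ^ n) = (((n.factorial : ℂ))⁻¹ * μ ^ n) • w := by
    intro n
    show ((((n.factorial : ℂ))⁻¹ : ℂ) • M ^ n) *ᵥ w = _
    rw [Matrix.smul_mulVec, hpow, smul_smul]
  simp_rw [h2]
  have hs : Summable fun n : ℕ => ((n.factorial : ℂ))⁻¹ * μ ^ n := by
    simpa [smul_eq_mul] using NormedSpace.expSeries_summable' (𝕂 := ℂ) μ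
  rw [hs.tsum_smul_const]
  congr 1
  rw [Complex.exp_eq_exp_ℂ, exp_eq_tsum ℂ]
  simp [smul_eq_mul]

lemma symm_isSymmetric' {N : Type*} [Fintype N] [DecidableEq N] {A : Matrix N N ℝ}
    (hA : A.IsSymm) : (Matrix.toEuclideanLin A).IsSymmetric :=
  Matrix.isHermitian_iff_isSymmetric.mp hA


open Module.End in
lemma eigProj_sum' {N : Type*} [Fintype N] [DecidableEq N] (A : Matrix N N ℝ) (hA : A.IsSymm)
    (x : EuclideanSpace ℝ N) :
    ∑ μ : Eigenvalues (Matrix.toEuclideanLin A), eigProj A μ x = x := by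
  classical
  set T := Matrix.toEuclideanLin A with hT
  haveI := Fact.mk (symm_isSymmetric' hA)
  have h := DirectSum.sum_support_decompose (fun μ : Eigenvalues T => eigenspace T μ) x
  have heq : ∀ μ : Eigenvalues T, eigProj A (μ : ℝ) x =
      ((DirectSum.decompose (fun ν : Eigenvalues T => eigenspace T ν) x μ :
        eigenspace T (μ : ℝ)) : EuclideanSpace ℝ N) := by
    intro μ
    rw [LinearMap.IsSymmetric.directSum_decompose_apply]
    rfl
  rw [Finset.sum_congr rfl (fun μ _ => heq μ)]
  refine ((Finset.sum_subset (Finset.subset_univ _) fun μ _ hμ => ?_).symm).trans h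
  have h0 : DirectSum.decompose (fun ν : Eigenvalues T => eigenspace T ν) x μ = 0 :=
    DFinsupp.notMem_support_iff.mp hμ
  rw [h0]
  rfl

open Module.End NormedSpace

/-- **Lemma 2 (sufficient conditions for perfect state transfer).** Suppose the eigenvalues
in `Φ_a` take the form `λ = (α + β_λ √Δ)/2` with each `(β_λ − β_μ)/2` an integer, that `a`
and `b` are strongly cospectral with signs `σ_λ ∈ {±1}` satisfying
`σ_λ σ_μ = (−1)^{(β_λ − β_μ)/2}`, and that `E_λ δ_b = 0` for eigenvalues `λ ∉ Φ_a`.  Then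
perfect state transfer from `a` to `b` occurs at all odd multiples of `π/√Δ`, with perfect
revivals at `a` at all even multiples. -/
theorem pst_at_odd_multiples {N : Type*} [Fintype N] [DecidableEq N]
    (A : Matrix N N ℝ) (hA : A.IsSymm) (a b : N)
    (α : ℤ) (Δ : ℕ) (hΔ : 1 ≤ Δ) (β : ℝ → ℤ) (σ : ℝ → ℝ)
    (hform : ∀ μ ∈ eigSupport A a, μ = ((α : ℝ) + (β μ : ℝ) * Real.sqrt Δ) / 2)
    (hpar : ∀ μ ∈ eigSupport A a, ∀ ν ∈ eigSupport A a, (2 : ℤ) ∣ β μ - β ν)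
    (hσ : ∀ μ ∈ eigSupport A a, (σ μ = 1 ∨ σ μ = -1) ∧
      eigProj A μ (EuclideanSpace.single b 1) = σ μ • eigProj A μ (EuclideanSpace.single a 1))
    (hout : ∀ μ : ℝ, Module.End.HasEigenvalue (Matrix.toEuclideanLin A) μ →
      μ ∉ eigSupport A a → eigProj A μ (EuclideanSpace.single b 1) = 0)
    (hsign : ∀ μ ∈ eigSupport A a, ∀ ν ∈ eigSupport A a,
      σ μ * σ ν = (-1 : ℝ) ^ ((β μ - β ν) / 2)) :
    (∀ j : ℕ, Odd j →
      ‖(NormedSpace.exp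
          ((-Complex.I * (j * Real.pi / Real.sqrt Δ)) • A.map (Complex.ofReal ·)) b a)‖ = 1) ∧
    (∀ j : ℕ, 0 < j → Even j →
      ‖(NormedSpace.exp
          ((-Complex.I * (j * Real.pi / Real.sqrt Δ)) • A.map (Complex.ofReal ·)) a a)‖ = 1) := by
  classical
  set T := Matrix.toEuclideanLin A with hTdef
  set δa : EuclideanSpace ℝ N := EuclideanSpace.single a 1 with hδa
  set v : Eigenvalues T → EuclideanSpace ℝ N := fun μ => eigProj A (μ : ℝ) δa with hvdef
  have hsum : ∑ μ : Eigenvalues T, v μ = δa := eigProj_sum' A hA δa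
  have hmem : ∀ μ : Eigenvalues T, v μ ∈ eigenspace T (μ : ℝ) := fun μ =>
    (Submodule.orthogonalProjectionOnto (eigenspace T (μ : ℝ)) δa).2
  have heig : ∀ μ : Eigenvalues T, T (v μ) = (μ : ℝ) • v μ := fun μ =>
    mem_eigenspace_iff.mp (hmem μ)
  set E := WithLp.linearEquiv 2 ℝ (N → ℝ) with hEdef
  set u : Eigenvalues T → (N → ℝ) := fun μ => E (v μ) with hudef
  have hmv : ∀ μ : Eigenvalues T, A *ᵥ u μ = (μ : ℝ) • u μ := by
    intro μ
    have h1 := heig μ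
    rw [Matrix.toEuclideanLin_apply] at h1
    have h2 := congrArg E h1
    simpa [hudef, hEdef, WithLp.coe_linearEquiv] using h2
  have hEδ : E δa = Pi.single a (1 : ℝ) := by
    funext i
    simp [hδa, hEdef, WithLp.linearEquiv_apply, WithLp.coe_linearEquiv,
      EuclideanSpace.single_apply, Pi.single_apply]
  have hEsum : ∑ μ : Eigenvalues T, u μ = Pi.single a (1 : ℝ) := by
    rw [← hEδ, ← hsum, map_sum]
  -- r μ : the squared norm of the projection
  set r : Eigenvalues T → ℝ := fun μ => u μ a with hrdef
  have hrsum : ∑ μ : Eigenvalues T, r μ = 1 := by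
    have h1 := congrFun hEsum a
    rw [Finset.sum_apply] at h1
    simpa [Pi.single_apply] using h1
  -- projections of δ_b
  have hub : ∀ μ : Eigenvalues T, (μ : ℝ) ∈ eigSupport A a → u μ b = σ (μ : ℝ) * r μ := by
    intro μ hμΦ
    have hμ : eigProj A (μ : ℝ) (EuclideanSpace.single b 1) = σ (μ : ℝ) • v μ := (hσ _ hμΦ).2
    have hP := Submodule.inner_starProjection_left_eq_right
      (eigenspace T (μ : ℝ)) (EuclideanSpace.single b 1) δa
    rw [Submodule.starProjection_apply, Submodule.starProjection_apply] at hP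
    have hcoe : (↑(Submodule.orthogonalProjectionOnto (eigenspace T (μ : ℝ)) (EuclideanSpace.single b 1)) :
        EuclideanSpace ℝ N) = σ (μ : ℝ) • v μ := hμ
    have hcoe2 : (↑(Submodule.orthogonalProjectionOnto (eigenspace T (μ : ℝ)) δa) :
        EuclideanSpace ℝ N) = v μ := rfl
    rw [hcoe, hcoe2, real_inner_smul_left, real_inner_comm] at hP
    have hL : (inner ℝ (EuclideanSpace.single b (1 : ℝ)) (v μ) : ℝ) = v μ b := by
      simp [EuclideanSpace.inner_single_left]
    have hR : (inner ℝ (EuclideanSpace.single a (1 : ℝ)) (v μ) : ℝ) = v μ a := by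
      simp [EuclideanSpace.inner_single_left]
    show v μ b = σ (μ : ℝ) * v μ a
    rw [← hL, ← hR, ← hδa, ← hP]
  have hzero : ∀ μ : Eigenvalues T, (μ : ℝ) ∉ eigSupport A a → v μ = 0 := by
    intro μ hμ
    simpa [eigSupport, hδa, hvdef] using not_not.mp hμ
  -- entry formula for the exponential
  set M : Matrix N N ℂ := A.map (Complex.ofReal ·) with hMdef
  have hEntry : ∀ (t : ℂ) (i : N),
      exp (t • M) i a = ∑ μ : Eigenvalues T, Complex.exp (t * (μ : ℝ)) * (u μ i : ℂ) := by
    intro t i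
    set wc : Eigenvalues T → (N → ℂ) := fun μ => fun i => (u μ i : ℂ) with hwc
    have hMw : ∀ μ : Eigenvalues T, M *ᵥ wc μ = ((μ : ℝ) : ℂ) • wc μ := by
      intro μ
      funext i
      have h1 := congrFun (hmv μ) i
      simp only [Matrix.mulVec, dotProduct, Pi.smul_apply, smul_eq_mul] at h1 ⊢
      simp only [hMdef, Matrix.map_apply, hwc]
      push_cast
      exact_mod_cast congrArg (Complex.ofReal) h1
    have hsingle : (Pi.single a (1 : ℂ) : N → ℂ) = ∑ μ : Eigenvalues T, wc μ := by
      funext i'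
      rw [Finset.sum_apply]
      have h1 := congrFun hEsum i'
      rw [Finset.sum_apply] at h1
      simp only [hwc]
      rw [← Complex.ofReal_sum, h1]
      simp [Pi.single_apply, apply_ite Complex.ofReal]
    have h2 : exp (t • M) i a = (exp (t • M) *ᵥ Pi.single a (1 : ℂ)) i := by
      rw [Matrix.mulVec_single]
      simp
    rw [h2, hsingle, ← Matrix.mulVecLin_apply, map_sum]
    rw [Finset.sum_apply]
    refine Finset.sum_congr rfl fun μ _ => ?_
    rw [Matrix.mulVecLin_apply]
    have h3 : (t • M) *ᵥ wc μ = (t * ((μ : ℝ) : ℂ)) • wc μ := by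
      rw [Matrix.smul_mulVec, hMw μ, smul_smul]
    rw [exp_mulVec_eigenvector' _ _ _ h3]
    simp [hwc, smul_eq_mul]
  -- choose a base eigenvalue
  have hδa0 : δa ≠ 0 := by
    intro h
    have h1 := congrFun (congrArg (⇑E) h) a
    rw [hEδ] at h1
    simpa using h1
  obtain ⟨μ₀, hμ₀⟩ : ∃ μ : Eigenvalues T, v μ ≠ 0 := by
    by_contra h
    push_neg at h
    exact hδa0 (by rw [← hsum]; exact Finset.sum_eq_zero fun μ _ => h μ)
  have hμ₀Φ : (μ₀ : ℝ) ∈ eigSupport A a := hμ₀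
  set σ₀ : ℝ := σ (μ₀ : ℝ) with hσ₀def
  have hσ₀pm : σ₀ = 1 ∨ σ₀ = -1 := (hσ _ hμ₀Φ).1
  have hσ₀sq : σ₀ * σ₀ = 1 := by rcases hσ₀pm with h | h <;> rw [h] <;> norm_num
  have hΔ0 : (0 : ℝ) < (Δ : ℝ) := by exact_mod_cast hΔ
  have hs0 : (0 : ℝ) < Real.sqrt Δ := Real.sqrt_pos.mpr hΔ0
  have hsne : ((Real.sqrt Δ : ℝ) : ℂ) ≠ 0 := by exact_mod_cast hs0.ne'
  have hkk : ∀ k : ℤ, (-1 : ℂ) ^ k * (-1 : ℂ) ^ k = 1 := fun k => by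
    rw [← mul_zpow]; norm_num
  have master : ∀ j : ℕ,
      (Odd j → ‖(exp
        ((-Complex.I * (j * Real.pi / Real.sqrt Δ)) • M) b a)‖ = 1) ∧
      (Even j → ‖(exp
        ((-Complex.I * (j * Real.pi / Real.sqrt Δ)) • M) a a)‖ = 1) := by
    intro j
    set c : ℂ := -Complex.I * (j * Real.pi / Real.sqrt Δ) with hcdef
    set x₁ : ℝ := -(j * Real.pi * α / (2 * Real.sqrt Δ)) with hx₁def
    set x₂ : ℝ := -(j * Real.pi * (β (μ₀ : ℝ)) / 2) with hx₂def
    set γ₀ : ℂ := Complex.exp (x₁ * Complex.I) * Complex.exp (x₂ * Complex.I) with hγ₀def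
    have hγ₀abs : ‖γ₀‖ = 1 := by
      rw [hγ₀def, norm_mul, Complex.norm_exp, Complex.norm_exp]
      simp
    have hkey : ∀ μ : Eigenvalues T, (μ : ℝ) ∈ eigSupport A a → ∃ k : ℤ,
        Complex.exp (c * ((μ : ℝ) : ℂ)) = γ₀ * ((-1 : ℂ) ^ ((j : ℤ) * k)) ∧
        σ (μ : ℝ) = (-1 : ℝ) ^ k * σ₀ := by
      intro μ hμΦ
      obtain ⟨k, hk⟩ : ∃ k : ℤ, β (μ : ℝ) = β (μ₀ : ℝ) + 2 * k := by
        obtain ⟨k, hk⟩ := hpar _ hμΦ _ hμ₀Φ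
        exact ⟨k, by omega⟩
      refine ⟨k, ?_, ?_⟩
      · have hμval : ((μ : ℝ) : ℂ) =
            ((((α : ℝ) + (β (μ : ℝ) : ℝ) * Real.sqrt Δ) / 2 : ℝ) : ℂ) := by
          exact_mod_cast congrArg Complex.ofReal (hform _ hμΦ)
        have hβC : ((β (μ : ℝ) : ℤ) : ℂ) = ((β (μ₀ : ℝ) : ℤ) : ℂ) + 2 * (k : ℂ) := by
          exact_mod_cast hk
        have hcμ : c * ((μ : ℝ) : ℂ) = (x₁ : ℂ) * Complex.I + (x₂ : ℂ) * Complex.I +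
            ((-((j : ℤ) * k) : ℤ) : ℂ) * (Real.pi * Complex.I) := by
          rw [hμval, hcdef, hx₁def, hx₂def]
          push_cast
          rw [hβC]
          field_simp
          ring
        rw [hcμ, Complex.exp_add, Complex.exp_add, Complex.exp_int_mul, Complex.exp_pi_mul_I]
        rw [hγ₀def]
        rw [_root_.zpow_neg, ← _root_.inv_zpow, _root_.inv_neg, inv_one]
      · have h1 := hsign _ hμΦ _ hμ₀Φ
        have hdiv : (β (μ : ℝ) - β (μ₀ : ℝ)) / 2 = k := by omega
        rw [hdiv] at h1
        calc σ (μ : ℝ) = σ (μ : ℝ) * (σ₀ * σ₀) := by rw [hσ₀sq, mul_one]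
          _ = σ (μ : ℝ) * σ₀ * σ₀ := by ring
          _ = (-1 : ℝ) ^ k * σ₀ := by rw [h1]
    have hzr : ∀ μ : Eigenvalues T, (μ : ℝ) ∉ eigSupport A a → u μ = 0 := by
      intro μ hμΦ
      rw [hudef]
      simp only [hzero μ hμΦ, map_zero]
    constructor
    · intro hj
      rw [hEntry c b]
      have hterm : ∀ μ : Eigenvalues T,
          Complex.exp (c * ((μ : ℝ) : ℂ)) * ((u μ b : ℝ) : ℂ) =
          (γ₀ * (σ₀ : ℂ)) * ((r μ : ℝ) : ℂ) := by
        intro μ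
        by_cases hμΦ : (μ : ℝ) ∈ eigSupport A a
        · obtain ⟨k, hek, hσk⟩ := hkey μ hμΦ
          rw [hub μ hμΦ, hek, hσk]
          have hjodd : ((-1 : ℂ)) ^ ((j : ℤ) * k) = (-1 : ℂ) ^ k := by
            rw [_root_.zpow_mul, zpow_natCast, hj.neg_one_pow]
          rw [hjodd]
          push_cast
          linear_combination (γ₀ * (σ₀ : ℂ) * ((r μ : ℝ) : ℂ)) * hkk k
        · have h0 := hzr μ hμΦ
          have hrμ : r μ = 0 := by rw [hrdef]; simp [h0]
          have hub0 : u μ b = 0 := by rw [h0]; rfl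
          rw [hrμ, hub0]
          simp
      rw [Finset.sum_congr rfl fun μ _ => hterm μ]
      rw [← Finset.mul_sum, ← Complex.ofReal_sum, hrsum]
      rw [Complex.ofReal_one, mul_one, norm_mul, hγ₀abs, one_mul, Complex.norm_real]
      rcases hσ₀pm with h | h <;> rw [h] <;> norm_num
    · intro hj
      rw [hEntry c a]
      have hterm : ∀ μ : Eigenvalues T,
          Complex.exp (c * ((μ : ℝ) : ℂ)) * ((u μ a : ℝ) : ℂ) =
          γ₀ * ((r μ : ℝ) : ℂ) := by
        intro μ
        by_cases hμΦ : (μ : ℝ) ∈ eigSupport A a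
        · obtain ⟨k, hek, -⟩ := hkey μ hμΦ
          rw [hek]
          have hjeven : ((-1 : ℂ)) ^ ((j : ℤ) * k) = 1 := by
            refine Even.neg_one_zpow ?_
            exact (Int.even_coe_nat j |>.mpr hj).mul_right k
          rw [hjeven, mul_one]
        · have h0 := hzr μ hμΦ
          have hrμ : r μ = 0 := by rw [hrdef]; simp [h0]
          have hua0 : u μ a = 0 := by rw [h0]; rfl
          rw [hrμ, hua0]
          simp
      rw [Finset.sum_congr rfl fun μ _ => hterm μ]
      rw [← Finset.mul_sum, ← Complex.ofReal_sum, hrsum]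
      rw [Complex.ofReal_one, mul_one, hγ₀abs]
  exact ⟨fun j hj => (master j).1 hj, fun j _ hj => (master j).2 hj⟩
end

section
/- Let A be a real symmetric N × N matrix, B a real symmetric M × M matrix, and S a real N × M matrix with SᵀS = I_M and A S = S B. Suppose S e_p = δ_a and S e_q = δ_b for indices p, q of B and a, b of A (where e_p, e_q and δ_a, δ_b are standard basis vectors). If |(exp(−i t B))_{q,p}| = 1 for some t, then |(exp(−i t A))_{b,a}| = 1. (Perfect state transfer in a graph quotient lifts to perfect state transfer in the graph.) -/
open Matrix

private lemma pow_intertwine {N M : Type*} [Fintype N] [DecidableEq N]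
    [Fintype M] [DecidableEq M]
    (A : Matrix N N ℂ) (B : Matrix M M ℂ) (S : Matrix N M ℂ)
    (h : A * S = S * B) : ∀ n : ℕ, A ^ n * S = S * B ^ n
  | 0 => by simp
  | n + 1 => by
    rw [pow_succ, pow_succ, Matrix.mul_assoc, h, ← Matrix.mul_assoc,
      pow_intertwine A B S h n, Matrix.mul_assoc]

private lemma exp_intertwine {N M : Type*} [Fintype N] [DecidableEq N]
    [Fintype M] [DecidableEq M]
    (A : Matrix N N ℂ) (B : Matrix M M ℂ) (S : Matrix N M ℂ)
    (h : A * S = S * B) :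
    NormedSpace.exp A * S = S * NormedSpace.exp B := by
  letI : SeminormedRing (Matrix N N ℂ) := Matrix.linftyOpSemiNormedRing
  letI : NormedRing (Matrix N N ℂ) := Matrix.linftyOpNormedRing
  letI : NormedAlgebra ℂ (Matrix N N ℂ) := Matrix.linftyOpNormedAlgebra
  letI : SeminormedRing (Matrix M M ℂ) := Matrix.linftyOpSemiNormedRing
  letI : NormedRing (Matrix M M ℂ) := Matrix.linftyOpNormedRing
  letI : NormedAlgebra ℂ (Matrix M M ℂ) := Matrix.linftyOpNormedAlgebra
  have hsA : HasSum (fun n : ℕ => (n.factorial : ℂ)⁻¹ • A ^ n) (NormedSpace.exp A) := by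
    rw [NormedSpace.exp_eq_tsum (𝕂 := ℂ)]
    exact (NormedSpace.expSeries_summable' A).hasSum
  have hsB : HasSum (fun n : ℕ => (n.factorial : ℂ)⁻¹ • B ^ n) (NormedSpace.exp B) := by
    rw [NormedSpace.exp_eq_tsum (𝕂 := ℂ)]
    exact (NormedSpace.expSeries_summable' B).hasSum
  let R : Matrix N N ℂ →ₗ[ℂ] Matrix N M ℂ :=
    { toFun := fun X => X * S
      map_add' := fun X Y => Matrix.add_mul X Y S
      map_smul' := fun c X => Matrix.smul_mul c X S }
  let L : Matrix M M ℂ →ₗ[ℂ] Matrix N M ℂ :=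
    { toFun := fun X => S * X
      map_add' := fun X Y => Matrix.mul_add S X Y
      map_smul' := fun c X => (Matrix.mul_smul S c X) }
  have hR : HasSum (fun n : ℕ => ((n.factorial : ℂ)⁻¹ • A ^ n) * S)
      (NormedSpace.exp A * S) :=
    hsA.mapL (LinearMap.toContinuousLinearMap R)
  have hL : HasSum (fun n : ℕ => S * ((n.factorial : ℂ)⁻¹ • B ^ n))
      (S * NormedSpace.exp B) :=
    hsB.mapL (LinearMap.toContinuousLinearMap L)
  have heq : (fun n : ℕ => ((n.factorial : ℂ)⁻¹ • A ^ n) * S)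
      = fun n : ℕ => S * ((n.factorial : ℂ)⁻¹ • B ^ n) := by
    funext n
    rw [Matrix.smul_mul, pow_intertwine A B S h n, ← Matrix.mul_smul]
  rw [heq] at hR
  exact hR.unique hL

/-- **Perfect state transfer in a graph quotient lifts to the graph.** If `S` is an
isometric intertwiner (`Sᵀ S = 1`, `A S = S B`) mapping `e_p ↦ δ_a` and `e_q ↦ δ_b`, then
perfect state transfer from `p` to `q` under `B` implies perfect state transfer from `a`
to `b` under `A`. -/
theorem quotient_pst_lifts {N M : Type*} [Fintype N] [DecidableEq N]
    [Fintype M] [DecidableEq M]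
    (A : Matrix N N ℝ) (B : Matrix M M ℝ) (S : Matrix N M ℝ)
    (hA : A.IsSymm) (hB : B.IsSymm)
    (hS : Sᵀ * S = 1) (hint : A * S = S * B)
    (p q : M) (a b : N)
    (hp : S *ᵥ Pi.single p 1 = Pi.single a 1)
    (hq : S *ᵥ Pi.single q 1 = Pi.single b 1)
    (t : ℝ)
    (hPST : ‖
      (NormedSpace.exp ((-Complex.I * t) • B.map (Complex.ofReal ·)) q p)‖ = 1) :
    ‖
      (NormedSpace.exp ((-Complex.I * t) • A.map (Complex.ofReal ·)) b a)‖ = 1 := by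
  set c : ℂ := -Complex.I * t
  set A' : Matrix N N ℂ := A.map (Complex.ofReal ·)
  set B' : Matrix M M ℂ := B.map (Complex.ofReal ·)
  set S' : Matrix N M ℂ := S.map (Complex.ofReal ·)
  -- column p of S is e_a, column q of S is e_b
  have hcolp : ∀ i, S i p = if i = a then 1 else 0 := by
    intro i
    have := congrFun hp i
    simpa [mulVec_single, Pi.single_apply] using this
  have hcolq : ∀ i, S i q = if i = b then 1 else 0 := by
    intro i
    have := congrFun hq i
    simpa [mulVec_single, Pi.single_apply] using this
  -- row b of S is e_q
  have hrowb : ∀ k, S b k = if q = k then 1 else 0 := by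
    intro k
    have h1 : (Sᵀ * S) q k = (1 : Matrix M M ℝ) q k := by rw [hS]
    have h2 : (Sᵀ * S) q k = ∑ i, S i q * S i k := by
      simp [Matrix.mul_apply, Matrix.transpose_apply]
    rw [h2] at h1
    have h3 : ∑ i, S i q * S i k = S b k := by
      rw [Finset.sum_eq_single b]
      · rw [hcolq b]; simp
      · intro i _ hib; rw [hcolq i]; simp [hib]
      · simp
    rw [h3] at h1
    rw [h1, Matrix.one_apply]
  have hint' : (c • A') * S' = S' * (c • B') := by
    have hmap : A' * S' = S' * B' := by
      ext i j
      have h0 : (A * S) i j = (S * B) i j := by rw [hint]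
      simp only [Matrix.mul_apply, Matrix.map_apply, A', B', S'] at h0 ⊢
      exact_mod_cast h0
    rw [Matrix.smul_mul, hmap, ← Matrix.mul_smul]
  have key := exp_intertwine (c • A') (c • B') S' hint'
  have hentry : (NormedSpace.exp (c • A') * S') b p
      = (S' * NormedSpace.exp (c • B')) b p := by rw [key]
  have hleft : (NormedSpace.exp (c • A') * S') b p
      = NormedSpace.exp (c • A') b a := by
    rw [Matrix.mul_apply]
    rw [Finset.sum_eq_single a]
    · simp [S', Matrix.map_apply, hcolp a]
    · intro k _ hka
      simp [S', Matrix.map_apply, hcolp k, hka]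
    · simp
  have hright : (S' * NormedSpace.exp (c • B')) b p
      = NormedSpace.exp (c • B') q p := by
    rw [Matrix.mul_apply]
    rw [Finset.sum_eq_single q]
    · simp [S', Matrix.map_apply, hrowb q]
    · intro k _ hkq
      simp [S', Matrix.map_apply, hrowb k, Ne.symm hkq]
    · simp
  rw [← hleft, hentry, hright]
  exact hPST
end

section
/- Fix D ≥ 1 and let A be the 2^D × 2^D matrix indexed by vectors x ∈ (ZMod 2)^D, with A_{x,y} = 1 if x and y differ in exactly one coordinate and A_{x,y} = 0 otherwise (the adjacency matrix of the D-dimensional hypercube graph). Then for every x, |(exp(−i (π/2) A))_{x + 𝟙, x}| = 1, where 𝟙 is the all-ones vector of (ZMod 2)^D; moreover, the graph distance between x and x + 𝟙 in the hypercube graph is D. Thus the hypercube achieves perfect state transfer over distance D at time π/2, using 2^D vertices. -/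
open Matrix Finset

/-- The `D`-dimensional hypercube graph on vertex set `(ZMod 2)^D`: two vertices are
adjacent iff they differ in exactly one coordinate. -/
def hypercube (D : ℕ) : SimpleGraph (Fin D → ZMod 2) where
  Adj x y := (Finset.univ.filter fun i => x i ≠ y i).card = 1
  symm := by
    constructor
    intro x y h
    simpa [ne_comm] using h
  loopless := by
    constructor
    intro x h
    simp at h

instance (D : ℕ) : DecidableRel (hypercube D).Adj :=
  fun x y => inferInstanceAs (Decidable ((Finset.univ.filter fun i => x i ≠ y i).card = 1))

namespace HypercubePST

variable {D : ℕ}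

/-- standard basis vector -/
def ee (i : Fin D) : Fin D → ZMod 2 := Pi.single i 1

/-- translation matrix by `u` -/
def T (u : Fin D → ZMod 2) : Matrix (Fin D → ZMod 2) (Fin D → ZMod 2) ℂ :=
  Matrix.of fun a b => if a = b + u then 1 else 0

lemma T_mul (u v : Fin D → ZMod 2) : T u * T v = T (u + v) := by
  ext a b
  rw [Matrix.mul_apply, Finset.sum_eq_single (b + v)]
  · simp [T, add_assoc, add_comm v u]
  · intro c _ hc
    simp [T, hc]
  · simp

lemma T_zero : T (0 : Fin D → ZMod 2) = 1 := by
  ext a b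
  simp [T, Matrix.one_apply]

lemma add_self_zmod2 (u : Fin D → ZMod 2) : u + u = 0 := by
  funext i
  have : ∀ a : ZMod 2, a + a = 0 := by decide
  exact this (u i)

lemma T_invol (u : Fin D → ZMod 2) : T u * T u = 1 := by
  rw [T_mul, add_self_zmod2, T_zero]

lemma eq_add_single_iff (a b : Fin D → ZMod 2) (i : Fin D) :
    a = b + ee i ↔ (Finset.univ.filter fun j => a j ≠ b j) = {i} := by
  rw [funext_iff, Finset.ext_iff]
  apply forall_congr'
  intro j
  simp only [Pi.add_apply, ee, Pi.single_apply, Finset.mem_filter, Finset.mem_univ,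
    true_and, Finset.mem_singleton]
  by_cases hj : j = i
  · subst hj
    simp only [if_pos rfl, iff_true]
    have : ∀ p q : ZMod 2, p = q + 1 ↔ ¬p = q := by decide
    exact this _ _
  · simp [hj]

lemma adj_iff (a b : Fin D → ZMod 2) :
    (hypercube D).Adj a b ↔ ∃ i, a = b + ee i := by
  constructor
  · intro h
    obtain ⟨i, hi⟩ := Finset.card_eq_one.mp h
    exact ⟨i, (eq_add_single_iff a b i).mpr hi⟩
  · rintro ⟨i, hi⟩
    show (Finset.univ.filter fun j => a j ≠ b j).card = 1
    rw [(eq_add_single_iff a b i).mp hi]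
    simp

lemma adjMatrix_eq :
    (hypercube D).adjMatrix ℂ = ∑ i : Fin D, T (ee i) := by
  ext a b
  rw [Matrix.sum_apply]
  simp only [SimpleGraph.adjMatrix_apply, T, Matrix.of_apply]
  by_cases h : (hypercube D).Adj a b
  · obtain ⟨i0, hi0⟩ := (adj_iff a b).mp h
    rw [if_pos h, Finset.sum_eq_single i0]
    · simp [hi0]
    · intro j _ hj
      rw [if_neg]
      intro hja
      apply hj
      have he : ee j = ee i0 := add_left_cancel (hja.symm.trans hi0)
      have := congrFun he j
      simp only [ee, Pi.single_apply, if_pos rfl] at this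
      by_contra hji
      rw [if_neg (fun hh => hji hh)] at this
      exact absurd this (by decide)
    · simp
  · rw [if_neg h]
    symm
    apply Finset.sum_eq_zero
    intro i _
    rw [if_neg]
    intro hi
    exact h ((adj_iff a b).mpr ⟨i, hi⟩)

lemma sum_ee : ∑ i : Fin D, ee i = (1 : Fin D → ZMod 2) := by
  funext j
  simp [ee, Finset.sum_apply, Pi.single_apply]

theorem exp_smul_involution {𝔸 : Type*} [NormedRing 𝔸] [NormedAlgebra ℂ 𝔸]
    [CompleteSpace 𝔸] (P : 𝔸) (h : P * P = 1) (t : ℝ) :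
    NormedSpace.exp ((-Complex.I * (t : ℂ)) • P) =
      (Complex.cos t) • (1 : 𝔸) + (-Complex.I * Complex.sin t) • P := by
  have hP2 : ∀ k : ℕ, P ^ (2 * k) = 1 := fun k => by
    rw [pow_mul, sq, h, one_pow]
  have hc : ∀ k : ℕ, (-Complex.I * (t : ℂ)) ^ (2 * k) = (-1 : ℂ) ^ k * (t : ℂ) ^ (2 * k) := by
    intro k
    rw [mul_pow, pow_mul, pow_mul, neg_sq, Complex.I_sq]
  rw [NormedSpace.exp_eq_tsum ℂ]
  refine HasSum.tsum_eq ?_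
  refine HasSum.even_add_odd ?_ ?_
  · have := (Complex.hasSum_cos (t : ℂ)).smul_const (1 : 𝔸)
    convert this using 2 with k
    rw [smul_pow, hP2, hc, smul_smul]
    congr 1
    field_simp
  · have := ((Complex.hasSum_sin (t : ℂ)).mul_left (-Complex.I)).smul_const P
    convert this using 2 with k
    have hpow : (-Complex.I * (t : ℂ)) ^ (2 * k + 1)
        = -Complex.I * ((-1 : ℂ) ^ k * (t : ℂ) ^ (2 * k + 1)) := by
      rw [pow_succ, hc]; ring
    have hPodd : P ^ (2 * k + 1) = P := by rw [pow_succ, hP2, one_mul]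
    rw [smul_pow, hPodd, hpow, smul_smul]
    congr 1
    field_simp

/-- exp of `(-i π/2) P` for a matrix involution `P` is `-i P`. -/
lemma exp_pihalf (P : Matrix (Fin D → ZMod 2) (Fin D → ZMod 2) ℂ)
    (h : P * P = 1) :
    NormedSpace.exp ((-Complex.I * ((Real.pi / 2 : ℝ) : ℂ)) • P) = -Complex.I • P := by
  letI : SeminormedRing (Matrix (Fin D → ZMod 2) (Fin D → ZMod 2) ℂ) :=
    Matrix.linftyOpSemiNormedRing
  letI : NormedRing (Matrix (Fin D → ZMod 2) (Fin D → ZMod 2) ℂ) := Matrix.linftyOpNormedRing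
  letI : NormedAlgebra ℂ (Matrix (Fin D → ZMod 2) (Fin D → ZMod 2) ℂ) :=
    Matrix.linftyOpNormedAlgebra
  refine (exp_smul_involution P h (Real.pi / 2)).trans ?_
  rw [← Complex.ofReal_cos, ← Complex.ofReal_sin, Real.cos_pi_div_two, Real.sin_pi_div_two]
  simp

lemma commute_T (u v : Fin D → ZMod 2) : Commute (T u) (T v) := by
  show T u * T v = T v * T u
  rw [T_mul, T_mul, add_comm]

lemma exp_T_sum (s : Finset (Fin D)) :
    NormedSpace.exp ((-Complex.I * ((Real.pi / 2 : ℝ) : ℂ)) • ∑ i ∈ s, T (ee i)) =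
      (-Complex.I) ^ s.card • T (∑ i ∈ s, ee i) := by
  classical
  induction s using Finset.induction with
  | empty => simp [T_zero, NormedSpace.exp_zero]
  | @insert a s ha ih =>
    have hcomm : Commute ((-Complex.I * ((Real.pi / 2 : ℝ) : ℂ)) • T (ee a))
        ((-Complex.I * ((Real.pi / 2 : ℝ) : ℂ)) • ∑ i ∈ s, T (ee i)) := by
      apply Commute.smul_left
      apply Commute.smul_right
      exact Commute.sum_right _ _ _ fun j _ => commute_T (ee a) (ee j)
    rw [Finset.sum_insert ha, smul_add, Matrix.exp_add_of_commute _ _ hcomm,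
      exp_pihalf (T (ee a)) (T_invol _), ih, smul_mul_smul_comm, T_mul,
      Finset.card_insert_of_notMem ha, Finset.sum_insert ha, pow_succ]
    ring_nf

lemma exp_adj :
    NormedSpace.exp ((-Complex.I * (Real.pi / 2)) • (hypercube D).adjMatrix ℂ) =
      (-Complex.I) ^ D • T (1 : Fin D → ZMod 2) := by
  have hc : (-Complex.I * (Real.pi / 2) : ℂ)
      = -Complex.I * ((Real.pi / 2 : ℝ) : ℂ) := by
    push_cast
    ring
  rw [hc, adjMatrix_eq, exp_T_sum, Finset.card_univ, Fintype.card_fin, sum_ee]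

/-! ### Walk lemmas -/

lemma exists_walk (s : Finset (Fin D)) :
    ∀ u : Fin D → ZMod 2,
      ∃ p : (hypercube D).Walk u (u + ∑ i ∈ s, ee i), p.length = s.card := by
  classical
  induction s using Finset.induction with
  | empty =>
    intro u
    rw [Finset.sum_empty, add_zero]
    exact ⟨SimpleGraph.Walk.nil, rfl⟩
  | @insert a s ha ih =>
    intro u
    rw [Finset.sum_insert ha, ← add_assoc]
    obtain ⟨p, hp⟩ := ih (u + ee a)
    have hadj : (hypercube D).Adj u (u + ee a) :=
      (hypercube D).adj_symm ((adj_iff (u + ee a) u).mpr ⟨a, rfl⟩)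
    exact ⟨SimpleGraph.Walk.cons hadj p, by
      simp [SimpleGraph.Walk.length_cons, hp, Finset.card_insert_of_notMem ha]⟩

lemma card_diff_le_walk_length {u v : Fin D → ZMod 2} (p : (hypercube D).Walk u v) :
    (Finset.univ.filter fun i => u i ≠ v i).card ≤ p.length := by
  induction p with
  | nil => simp
  | @cons u w v h p ih =>
    have hsub : (Finset.univ.filter fun i => u i ≠ v i) ⊆
        (Finset.univ.filter fun i => u i ≠ w i) ∪
          (Finset.univ.filter fun i => w i ≠ v i) := by
      intro i hi
      simp only [Finset.mem_filter, Finset.mem_univ, true_and, Finset.mem_union] at hi ⊢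
      by_contra hcon
      push_neg at hcon
      exact hi (hcon.1.trans hcon.2)
    calc (Finset.univ.filter fun i => u i ≠ v i).card
        ≤ ((Finset.univ.filter fun i => u i ≠ w i) ∪
            (Finset.univ.filter fun i => w i ≠ v i)).card := Finset.card_le_card hsub
      _ ≤ (Finset.univ.filter fun i => u i ≠ w i).card +
            (Finset.univ.filter fun i => w i ≠ v i).card := Finset.card_union_le _ _
      _ ≤ 1 + p.length := by
          have hh : (Finset.univ.filter fun i => u i ≠ w i).card = 1 := h
          omega
      _ = (SimpleGraph.Walk.cons h p).length := by
          rw [SimpleGraph.Walk.length_cons]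
          omega

lemma card_diff_antipode (x : Fin D → ZMod 2) :
    (Finset.univ.filter fun i => x i ≠ (x + 1) i).card = D := by
  have hne : ∀ i, x i ≠ (x + 1) i := by
    intro i
    have : ∀ a : ZMod 2, a ≠ a + 1 := by decide
    exact this (x i)
  rw [Finset.filter_true_of_mem (fun i _ => hne i), Finset.card_univ, Fintype.card_fin]

end HypercubePST

open HypercubePST in
/-- **Hypercube perfect state transfer.** The `D`-dimensional hypercube achieves perfect
state transfer at time `π/2` from any vertex `x` to its antipode `x + 𝟙`, which lies at
graph distance `D`; it uses `2^D` vertices. -/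
theorem hypercube_pst (D : ℕ) (hD : 1 ≤ D) (x : Fin D → ZMod 2) :
    ‖(NormedSpace.exp
        ((-Complex.I * (Real.pi / 2)) • (hypercube D).adjMatrix ℂ) (x + 1) x)‖ = 1 ∧
    (hypercube D).dist x (x + 1) = D := by
  constructor
  · rw [exp_adj]
    have hT : T (1 : Fin D → ZMod 2) (x + 1) x = 1 := by
      simp [T]
    rw [Matrix.smul_apply, hT, smul_eq_mul, mul_one]
    rw [norm_pow]
    simp
  · -- distance
    obtain ⟨p0, hp0⟩ := exists_walk (Finset.univ : Finset (Fin D)) x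
    have h1 : x + ∑ i : Fin D, ee i = x + 1 := by rw [sum_ee]
    let p : (hypercube D).Walk x (x + 1) := p0.copy rfl h1
    have hp : p.length = (Finset.univ : Finset (Fin D)).card := by
      simpa [p, SimpleGraph.Walk.length_copy] using hp0
    have hple : (hypercube D).dist x (x + 1) ≤ D := by
      have := SimpleGraph.dist_le p
      rwa [hp, Finset.card_univ, Fintype.card_fin] at this
    have hreach : (hypercube D).Reachable x (x + 1) := ⟨p⟩
    obtain ⟨q, hq⟩ := hreach.exists_walk_length_eq_dist
    have hge : D ≤ (hypercube D).dist x (x + 1) := by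
      have := card_diff_le_walk_length q
      rwa [card_diff_antipode, hq] at this
    omega
end

section
/- Fix N ≥ 2 and let J be the N × N real symmetric tridiagonal matrix with J_{n,n+1} = J_{n+1,n} = √(n(N − n)) for 1 ≤ n ≤ N − 1 and all other entries zero (the standard engineered perfect state transfer chain). Then |(exp(−i (π/2) J))_{N,1}| = 1; that is, the chain achieves perfect state transfer between its two end sites at time π/2. -/
open Matrix

open Complex

noncomputable def pstf (N : ℕ) (t : ℝ) (m : ℕ) : ℂ :=
  (Real.sqrt ((N - 1).choose m) : ℂ) * (Real.cos t : ℂ) ^ (N - 1 - m) *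
    (-Complex.I * (Real.sin t : ℂ)) ^ m

lemma choose_id (N m : ℕ) :
    (m + 1) * (N - 1 - m) * ((N - 1).choose (m + 1)) = (N - 1 - m) ^ 2 * ((N - 1).choose m) := by
  have h2 := Nat.choose_succ_right_eq (N - 1) m
  have : (m + 1) * (N - 1 - m) * ((N - 1).choose (m + 1))
      = (N - 1 - m) * ((N - 1).choose (m + 1) * (m + 1)) := by ring
  rw [this, h2]; ring

lemma sqrtL2 (N m : ℕ) :
    Real.sqrt (((m + 1) * (N - 1 - m) : ℕ)) * Real.sqrt (((N - 1).choose (m + 1) : ℕ))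
      = ((N - 1 - m : ℕ) : ℝ) * Real.sqrt (((N - 1).choose m : ℕ)) := by
  rw [← Real.sqrt_mul (by positivity), ← Nat.cast_mul, choose_id,
    show ((N-1-m)^2 * ((N-1).choose m) : ℕ) = (N-1-m)^2 * ((N-1).choose m) from rfl]
  push_cast
  rw [Real.sqrt_mul (by positivity), Real.sqrt_sq (by positivity)]

lemma sqrtL1 (N p : ℕ) :
    Real.sqrt (((p + 1) * (N - (p + 1)) : ℕ)) * Real.sqrt (((N - 1).choose p : ℕ))
      = ((p + 1 : ℕ) : ℝ) * Real.sqrt (((N - 1).choose (p + 1) : ℕ)) := by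
  have hsub : N - (p + 1) = N - 1 - p := by omega
  have h2 := Nat.choose_succ_right_eq (N - 1) p
  have hid : (p + 1) * (N - (p + 1)) * ((N - 1).choose p) = (p + 1) ^ 2 * ((N - 1).choose (p + 1)) := by
    rw [hsub]
    have : (p + 1) * (N - 1 - p) * ((N - 1).choose p)
        = (p + 1) * ((N - 1).choose p * (N - 1 - p)) := by ring
    rw [this, ← h2]; ring
  rw [← Real.sqrt_mul (by positivity), ← Nat.cast_mul, hid]
  push_cast
  rw [Real.sqrt_mul (by positivity), Real.sqrt_sq (by positivity)]

lemma pstf_hasDerivAt (N m : ℕ) (hm : m < N) (t : ℝ) :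
    HasDerivAt (fun s : ℝ => pstf N s m)
      (-Complex.I * ((Real.sqrt ((m * (N - m) : ℕ)) : ℂ) * pstf N t (m - 1) +
        (Real.sqrt (((m + 1) * (N - 1 - m) : ℕ)) : ℂ) * pstf N t (m + 1))) t := by
  have h1 : HasDerivAt (fun z : ℂ => Complex.cos z ^ (N - 1 - m))
      ((N - 1 - m : ℕ) * Complex.cos t ^ (N - 1 - m - 1) * (-Complex.sin t)) (t : ℂ) :=
    (Complex.hasDerivAt_cos _).pow _
  have h2 : HasDerivAt (fun z : ℂ => (-Complex.I * Complex.sin z) ^ m)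
      ((m : ℂ) * (-Complex.I * Complex.sin t) ^ (m - 1) * (-Complex.I * Complex.cos t)) (t : ℂ) :=
    ((Complex.hasDerivAt_sin _).const_mul _).pow _
  have h3 := (((h1.mul h2).const_mul ((Real.sqrt ((N - 1).choose m) : ℂ)))).comp_ofReal
  have hfun : (fun s : ℝ => pstf N s m)
      = fun s : ℝ => (Real.sqrt ((N - 1).choose m) : ℂ) *
          ((Complex.cos s) ^ (N - 1 - m) * ((-Complex.I * Complex.sin s) ^ m)) := by
    funext s; simp [pstf, Complex.ofReal_cos, Complex.ofReal_sin]; ring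
  rw [hfun]
  convert h3 using 1
  · rfl
  simp only [pstf, Complex.ofReal_cos, Complex.ofReal_sin]
  rcases m with _ | p
  · -- m = 0
    have hz : ((0 : ℕ) * (N - 0) : ℕ) = 0 := by simp
    rw [hz]
    have hL2 := congrArg Complex.ofReal (sqrtL2 N 0)
    simp only [Complex.ofReal_mul, Complex.ofReal_natCast] at hL2
    simp only [Nat.choose_zero_right, Nat.cast_one, Real.sqrt_one, Complex.ofReal_one,
      Nat.cast_zero, Real.sqrt_zero, Complex.ofReal_zero, Nat.sub_zero, pow_zero, Nat.zero_sub,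
      zero_mul, mul_one, mul_zero, add_zero, zero_add] at hL2 ⊢
    linear_combination (-Complex.I * Complex.cos t ^ (N - 1 - 1)
      * (-Complex.I * Complex.sin t)) * hL2
      + (Complex.cos t ^ (N - 1 - 1) * Complex.sin t * ((N - 1 : ℕ) : ℂ)) * Complex.I_sq
  · -- m = p + 1
    have hL1 := congrArg Complex.ofReal (sqrtL1 N p)
    have hL2 := congrArg Complex.ofReal (sqrtL2 N (p + 1))
    simp only [Complex.ofReal_mul, Complex.ofReal_natCast] at hL1 hL2
    have e1 : N - 1 - p = (N - 1 - (p + 1)) + 1 := by omega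
    have e2 : N - 1 - (p + 1) - 1 = N - 1 - (p + 1 + 1) := by omega
    rw [show p + 1 - 1 = p from rfl, e1, e2]
    linear_combination (-Complex.I * Complex.cos t ^ (N - 1 - (p + 1)) * Complex.cos t
        * (-Complex.I * Complex.sin t) ^ p) * hL1
      + (-Complex.I * Complex.cos t ^ (N - 1 - (p + 1 + 1))
        * (-Complex.I * Complex.sin t) ^ (p + 1) * (-Complex.I * Complex.sin t)) * hL2
      - (Complex.I * Complex.I ^ p * Complex.cos t ^ (N - 1 - (p + 1 + 1)) * Complex.sin t ^ 2
        * Complex.sin t ^ p * ((Real.sqrt ((N - 1).choose (p + 1)) : ℝ) : ℂ)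
        * ((N - 1 - (p + 1) : ℕ) : ℂ) * (-1 : ℂ) ^ p) * Complex.I_sq

open NormedSpace in
lemma key_entry (N : ℕ) (hN : 2 ≤ N) (J : Matrix (Fin N) (Fin N) ℝ)
    (hJ : ∀ i j : Fin N, J i j =
      if (i : ℕ) + 1 = (j : ℕ) then Real.sqrt (((i : ℕ) + 1) * (N - 1 - (i : ℕ)))
      else if (j : ℕ) + 1 = (i : ℕ) then Real.sqrt (((j : ℕ) + 1) * (N - 1 - (j : ℕ)))
      else 0) (t : ℝ) (k : Fin N) :
    NormedSpace.exp (t • ((-Complex.I) • J.map (Complex.ofReal ·))) k ⟨0, lt_of_lt_of_le two_pos hN⟩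
      = pstf N t (k : ℕ) := by
  letI : SeminormedRing (Matrix (Fin N) (Fin N) ℂ) := Matrix.linftyOpSemiNormedRing
  letI : NormedRing (Matrix (Fin N) (Fin N) ℂ) := Matrix.linftyOpNormedRing
  letI : NormedAlgebra ℝ (Matrix (Fin N) (Fin N) ℂ) := Matrix.linftyOpNormedAlgebra
  letI : NormedAlgebra ℂ (Matrix (Fin N) (Fin N) ℂ) := Matrix.linftyOpNormedAlgebra
  letI : NormedAlgebra ℚ (Matrix (Fin N) (Fin N) ℂ) := Matrix.linftyOpNormedAlgebra
  set B : Matrix (Fin N) (Fin N) ℂ := (-Complex.I) • J.map (Complex.ofReal ·) with hB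
  have hBapp : ∀ i l : Fin N, B i l = -Complex.I * (J i l : ℂ) := by
    intro i l
    simp [hB, Matrix.smul_apply, Matrix.map_apply]
  set j0 : Fin N := (⟨0, by omega⟩ : Fin N) with hj0
  -- the row identity
  have hrow : ∀ (s : ℝ) (i : Fin N), (∑ l : Fin N, B i l * pstf N s (l : ℕ)) =
      -Complex.I * ((Real.sqrt (((i : ℕ) * (N - (i : ℕ)) : ℕ)) : ℂ) * pstf N s ((i : ℕ) - 1) +
        (Real.sqrt (((((i : ℕ)) + 1) * (N - 1 - (i : ℕ)) : ℕ)) : ℂ) * pstf N s ((i : ℕ) + 1)) := by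
    intro s i
    have h1 : ∀ l : Fin N, B i l * pstf N s (l : ℕ) =
        (if (i : ℕ) + 1 = (l : ℕ) then
          -Complex.I * ((Real.sqrt (((((i : ℕ)) + 1) * (N - 1 - (i : ℕ)) : ℕ)) : ℂ)
            * pstf N s (l : ℕ)) else 0)
        + (if (l : ℕ) + 1 = (i : ℕ) then
          -Complex.I * ((Real.sqrt (((i : ℕ) * (N - (i : ℕ)) : ℕ)) : ℂ)
            * pstf N s (l : ℕ)) else 0) := by
      intro l
      rw [hBapp, hJ]
      by_cases hc1 : (i : ℕ) + 1 = (l : ℕ)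
      · have hc2 : ¬((l : ℕ) + 1 = (i : ℕ)) := by omega
        rw [if_pos hc1, if_pos hc1, if_neg hc2, add_zero]
        -- i + 1 = l
        have hle : (i : ℕ) ≤ N - 1 := by omega
        have hsq : Real.sqrt ((((i : ℕ) : ℝ) + 1) * ((N : ℝ) - 1 - ((i : ℕ) : ℝ)))
            = Real.sqrt (((((i : ℕ)) + 1) * (N - 1 - (i : ℕ)) : ℕ)) := by
          congr 1
          push_cast [Nat.cast_sub hle, Nat.cast_sub (show 1 ≤ N by omega)]
          ring
        rw [hsq]; push_cast; ring
      · by_cases hc2 : (l : ℕ) + 1 = (i : ℕ)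
        · rw [if_neg hc1, if_pos hc2, if_neg hc1, if_pos hc2, zero_add]
          have hle : (l : ℕ) ≤ N - 1 := by omega
          have hsq : Real.sqrt ((((l : ℕ) : ℝ) + 1) * ((N : ℝ) - 1 - ((l : ℕ) : ℝ)))
              = Real.sqrt ((((i : ℕ)) * (N - (i : ℕ)) : ℕ)) := by
            congr 1
            have hr : ((l : ℕ) : ℝ) + 1 = ((i : ℕ) : ℝ) := by exact_mod_cast hc2
            push_cast [Nat.cast_sub (show (i : ℕ) ≤ N by omega),
              Nat.cast_sub (show 1 ≤ N by omega)]
            rw [← hr]; ring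
          rw [hsq]; push_cast; ring
        · rw [if_neg hc1, if_neg hc2, if_neg hc1, if_neg hc2, add_zero]
          push_cast; ring
    rw [Finset.sum_congr rfl fun l _ => h1 l, Finset.sum_add_distrib]
    have hs1 : (∑ l : Fin N, if (i : ℕ) + 1 = (l : ℕ) then
        -Complex.I * ((Real.sqrt (((((i : ℕ)) + 1) * (N - 1 - (i : ℕ)) : ℕ)) : ℂ)
          * pstf N s (l : ℕ)) else 0)
        = -Complex.I * ((Real.sqrt (((((i : ℕ)) + 1) * (N - 1 - (i : ℕ)) : ℕ)) : ℂ)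
          * pstf N s ((i : ℕ) + 1)) := by
      by_cases hlt : (i : ℕ) + 1 < N
      · rw [Finset.sum_eq_single (⟨(i : ℕ) + 1, hlt⟩ : Fin N)]
        · simp
        · intro b _ hb
          rw [if_neg]
          exact fun hc => hb (Fin.ext (by simpa using hc.symm))
        · simp
      · have hiN : (i : ℕ) + 1 = N := by omega
        have hz : N - 1 - (i : ℕ) = 0 := by omega
        rw [Finset.sum_eq_zero, hz]
        · simp
        · intro b _
          rw [if_neg]
          exact fun hc => by omega
    have hs2 : (∑ l : Fin N, if (l : ℕ) + 1 = (i : ℕ) then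
        -Complex.I * ((Real.sqrt (((i : ℕ) * (N - (i : ℕ)) : ℕ)) : ℂ)
          * pstf N s (l : ℕ)) else 0)
        = -Complex.I * ((Real.sqrt (((i : ℕ) * (N - (i : ℕ)) : ℕ)) : ℂ)
          * pstf N s ((i : ℕ) - 1)) := by
      by_cases hpos : 0 < (i : ℕ)
      · rw [Finset.sum_eq_single (⟨(i : ℕ) - 1, by omega⟩ : Fin N)]
        · rw [if_pos (by simp; omega)]
        · intro b _ hb
          rw [if_neg]
          intro hc
          exact hb (Fin.ext (by simp; omega))
        · simp
      · have hi0 : (i : ℕ) = 0 := by omega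
        rw [Finset.sum_eq_zero, hi0]
        · simp
        · intro b _
          rw [if_neg]
          omega
    rw [hs1, hs2]; ring
  -- the candidate solution as a matrix-valued function
  set F : ℝ → Matrix (Fin N) (Fin N) ℂ :=
    fun s => ∑ l : Fin N, pstf N s (l : ℕ) • Matrix.single l j0 (1 : ℂ) with hF
  have hFapp : ∀ (s : ℝ) (a b : Fin N), F s a b = if b = j0 then pstf N s (a : ℕ) else 0 := by
    intro s a b
    rw [hF]
    simp only [Matrix.sum_apply, Matrix.smul_apply, Matrix.single, Matrix.of_apply,
      smul_eq_mul, mul_ite, mul_one, mul_zero]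
    simp only [ite_and]
    rw [Finset.sum_ite_eq' Finset.univ a fun x => if j0 = b then pstf N s (x : ℕ) else 0]
    simp [eq_comm]
  -- F satisfies the ODE F' = B * F
  have hFD : ∀ s : ℝ, HasDerivAt F (B * F s) s := by
    intro s
    have h := HasDerivAt.fun_sum (fun (l : Fin N) (_ : l ∈ Finset.univ) =>
      (pstf_hasDerivAt N (l : ℕ) l.isLt s).smul_const (Matrix.single l j0 (1 : ℂ)))
    have heq : (∑ l : Fin N,
        (-Complex.I * ((Real.sqrt (((l : ℕ) * (N - (l : ℕ)) : ℕ)) : ℂ) * pstf N s ((l : ℕ) - 1) +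
          (Real.sqrt (((((l : ℕ)) + 1) * (N - 1 - (l : ℕ)) : ℕ)) : ℂ) * pstf N s ((l : ℕ) + 1)))
            • Matrix.single l j0 (1 : ℂ)) = B * F s := by
      ext a b
      rw [Matrix.mul_apply, Matrix.sum_apply]
      simp only [Matrix.smul_apply, Matrix.single, Matrix.of_apply, smul_eq_mul,
        mul_ite, mul_one, mul_zero, hFapp, ite_and]
      rw [Finset.sum_ite_eq' Finset.univ a
        (fun x => if j0 = b then -Complex.I *
          ((Real.sqrt (((x : ℕ) * (N - (x : ℕ)) : ℕ)) : ℂ) * pstf N s ((x : ℕ) - 1) +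
            (Real.sqrt (((((x : ℕ)) + 1) * (N - 1 - (x : ℕ)) : ℕ)) : ℂ) * pstf N s ((x : ℕ) + 1))
          else 0)]
      by_cases hb : b = j0
      · subst hb
        simp only [if_pos rfl, Finset.mem_univ, if_true, mul_ite, mul_zero]
        exact (hrow s a).symm
      · simp [hb, Ne.symm hb]
    rw [← heq]
    exact h
  -- exp(s • (-B)) * F s is constant
  set W : ℝ → Matrix (Fin N) (Fin N) ℂ :=
    fun u => NormedSpace.exp (u • (-B)) * F u with hW
  have hWD : ∀ s : ℝ, HasDerivAt W 0 s := by
    intro s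
    have hE := hasDerivAt_exp_smul_const (𝕂 := ℝ) (-B) s
    have h2 := hE.mul (hFD s)
    have h2' : HasDerivAt W (NormedSpace.exp (s • (-B)) * (-B) * F s
        + NormedSpace.exp (s • (-B)) * (B * F s)) s := h2
    rw [show NormedSpace.exp (s • (-B)) * (-B) * F s
        + NormedSpace.exp (s • (-B)) * (B * F s) = 0 by
      rw [mul_assoc, neg_mul, mul_neg, neg_add_cancel]] at h2'
    exact h2'
  have hWc : ∀ s : ℝ, W s = W 0 :=
    fun s => is_const_of_deriv_eq_zero (fun u => (hWD u).differentiableAt)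
      (fun u => (hWD u).deriv) s 0
  have hW0 : W 0 = F 0 := by
    rw [hW]
    simp
  have hexp1 : NormedSpace.exp (t • B) * NormedSpace.exp (t • (-B)) = 1 := by
    refine (NormedSpace.exp_add_of_commute (((Commute.refl B).neg_right).smul_left t |>.smul_right t)).symm.trans ?_
    rw [smul_neg, add_neg_cancel, NormedSpace.exp_zero]
  have hFt : F t = NormedSpace.exp (t • B) * F 0 := by
    calc F t = (NormedSpace.exp (t • B) * NormedSpace.exp (t • (-B))) * F t := by
          rw [hexp1, one_mul]
    _ = NormedSpace.exp (t • B) * (NormedSpace.exp (t • (-B)) * F t) := by rw [mul_assoc]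
    _ = NormedSpace.exp (t • B) * F 0 := by rw [show NormedSpace.exp (t • (-B)) * F t = F 0
          from (hWc t).trans hW0]
  have hF0 : ∀ l : Fin N, F 0 l j0 = if l = j0 then 1 else 0 := by
    intro l
    rw [hFapp, if_pos rfl]
    by_cases hl : l = j0
    · subst hl
      simp [pstf, hj0]
    · rw [if_neg hl]
      have hne : (l : ℕ) ≠ 0 := fun hc => hl (Fin.ext (by simp [hj0, hc]))
      simp [pstf, zero_pow hne]
  have hfinal := congrFun (congrFun hFt k) j0
  rw [hFapp, if_pos rfl] at hfinal
  have hsum : (NormedSpace.exp (t • B) * F 0) k j0 = NormedSpace.exp (t • B) k j0 := by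
    rw [Matrix.mul_apply]
    rw [Finset.sum_congr rfl fun l _ => by rw [hF0 l]]
    simp
  rw [hsum] at hfinal
  exact hfinal.symm


/-- **The standard engineered perfect state transfer chain.** Let `J` be the `N × N`
tridiagonal matrix with couplings `J_{n,n+1} = √(n(N−n))` (sites numbered `1,…,N`, here
indexed by `Fin N`).  Then the chain achieves perfect state transfer between its two end
sites at time `π/2`. -/
theorem engineered_chain_pst (N : ℕ) (hN : 2 ≤ N) (J : Matrix (Fin N) (Fin N) ℝ)
    (hJ : ∀ i j : Fin N, J i j =
      if (i : ℕ) + 1 = (j : ℕ) then Real.sqrt (((i : ℕ) + 1) * (N - 1 - (i : ℕ)))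
      else if (j : ℕ) + 1 = (i : ℕ) then Real.sqrt (((j : ℕ) + 1) * (N - 1 - (j : ℕ)))
      else 0) :
    ‖(NormedSpace.exp ((-Complex.I * (Real.pi / 2)) • J.map (Complex.ofReal ·))
        ⟨N - 1, by omega⟩ ⟨0, by omega⟩)‖ = 1 := by
  have hX : (-Complex.I * (Real.pi / 2)) • J.map (Complex.ofReal ·)
      = (Real.pi / 2 : ℝ) • ((-Complex.I) • J.map (Complex.ofReal ·)) := by
    rw [← smul_assoc]
    congr 1
    rw [Complex.real_smul]
    push_cast
    ring
  have h1 : NormedSpace.exp ((-Complex.I * (Real.pi / 2)) • J.map (Complex.ofReal ·))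
      = NormedSpace.exp ((-Complex.I * (Real.pi / 2)) • J.map (Complex.ofReal ·)) := by
    letI : SeminormedRing (Matrix (Fin N) (Fin N) ℂ) := Matrix.linftyOpSemiNormedRing
    letI : NormedRing (Matrix (Fin N) (Fin N) ℂ) := Matrix.linftyOpNormedRing
    letI : NormedAlgebra ℝ (Matrix (Fin N) (Fin N) ℂ) := Matrix.linftyOpNormedAlgebra
    letI : NormedAlgebra ℂ (Matrix (Fin N) (Fin N) ℂ) := Matrix.linftyOpNormedAlgebra
    rfl
  rw [h1, hX, key_entry N hN J hJ (Real.pi / 2) ⟨N - 1, by omega⟩]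
  simp [pstf, Real.cos_pi_div_two, Real.sin_pi_div_two, Nat.choose_self, Nat.sub_self]
end

section
/- For every k ∈ {1, 2} there is no k × 4 matrix M with entries in {0,1} such that Mᵀ M maps the all-ones vector of ℝ⁴ to 6 times itself; and there exists a 3 × 4 matrix M with entries in {0,1} such that Mᵀ M 𝟙₄ = 6 · 𝟙₄ (for example, the matrix with rows (1,1,1,1), (1,1,0,0), (0,0,1,1)). Consequently, in any graph with perfect state transfer over distance 4 whose distance partition has quotient equal to the standard engineered chain, the middle cell must contain at least 3 vertices, and 3 is achievable. -/
open Matrix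

lemma rowsum_aux (f : Fin 4 → ℝ) (hf : ∀ j, f j = 0 ∨ f j = 1) :
    f 0 + f 1 + f 2 + f 3 = 0 ∨ f 0 + f 1 + f 2 + f 3 = 1 ∨ f 0 + f 1 + f 2 + f 3 = 2 ∨
    f 0 + f 1 + f 2 + f 3 = 3 ∨ f 0 + f 1 + f 2 + f 3 = 4 := by
  rcases hf 0 with h0|h0 <;> rcases hf 1 with h1|h1 <;> rcases hf 2 with h2|h2 <;>
    rcases hf 3 with h3|h3 <;> rw [h0, h1, h2, h3] <;> norm_num

lemma no_one_row : ¬ ∃ M : Matrix (Fin 1) (Fin 4) ℝ,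
    (∀ i j, M i j = 0 ∨ M i j = 1) ∧
    (Mᵀ * M) *ᵥ (fun _ => (1 : ℝ)) = (6 : ℝ) • (fun _ => (1 : ℝ) : Fin 4 → ℝ) := by
  rintro ⟨M, h0, h1⟩
  have e0 := congrFun h1 0
  simp [Matrix.mulVec, Matrix.mul_apply, dotProduct, Fin.sum_univ_four,
    Fin.sum_univ_one] at e0
  rcases h0 0 0 with h|h <;> rcases h0 0 1 with h'|h' <;> rcases h0 0 2 with h''|h'' <;>
    rcases h0 0 3 with h'''|h''' <;>
    rw [h, h', h'', h'''] at e0 <;> norm_num at e0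

lemma no_two_rows : ¬ ∃ M : Matrix (Fin 2) (Fin 4) ℝ,
    (∀ i j, M i j = 0 ∨ M i j = 1) ∧
    (Mᵀ * M) *ᵥ (fun _ => (1 : ℝ)) = (6 : ℝ) • (fun _ => (1 : ℝ) : Fin 4 → ℝ) := by
  rintro ⟨M, h0, h1⟩
  have e0 := congrFun h1 0
  have e1 := congrFun h1 1
  have e2 := congrFun h1 2
  have e3 := congrFun h1 3
  simp [Matrix.mulVec, Matrix.mul_apply, dotProduct, Fin.sum_univ_four,
    Fin.sum_univ_two] at e0 e1 e2 e3
  have hs : (M 0 0 + M 0 1 + M 0 2 + M 0 3)^2 + (M 1 0 + M 1 1 + M 1 2 + M 1 3)^2 = 24 := by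
    linear_combination e0 + e1 + e2 + e3
  rcases rowsum_aux (M 0) (h0 0) with h|h|h|h|h <;>
    rcases rowsum_aux (M 1) (h0 1) with h'|h'|h'|h'|h' <;>
    rw [h, h'] at hs <;> norm_num at hs

/-- **Minimality of the middle cell for distance-4 transfer (Lemma 6, `D = 4` case).**
There is no `k × 4` matrix `M` with `{0,1}` entries, for `k ∈ {1, 2}`, such that `Mᵀ M`
maps the all-ones vector of `ℝ⁴` to `6` times itself, but there is such a `3 × 4` matrix.
Hence, in any graph with perfect state transfer over distance `4` whose distance partition
has quotient equal to the standard engineered chain, the middle cell must contain at least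
`3` vertices, and `3` is achievable. -/
theorem middle_cell_distance_four :
    (∀ k : ℕ, k = 1 ∨ k = 2 →
      ¬ ∃ M : Matrix (Fin k) (Fin 4) ℝ,
        (∀ i j, M i j = 0 ∨ M i j = 1) ∧
        (Mᵀ * M) *ᵥ (fun _ => (1 : ℝ)) = (6 : ℝ) • (fun _ => (1 : ℝ) : Fin 4 → ℝ)) ∧
    (∃ M : Matrix (Fin 3) (Fin 4) ℝ,
      (∀ i j, M i j = 0 ∨ M i j = 1) ∧
      (Mᵀ * M) *ᵥ (fun _ => (1 : ℝ)) = (6 : ℝ) • (fun _ => (1 : ℝ) : Fin 4 → ℝ)) := by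
  constructor
  · rintro k (rfl | rfl)
    · exact no_one_row
    · exact no_two_rows
  · refine ⟨!![(1:ℝ),1,1,1;1,1,0,0;0,0,1,1], ?_, ?_⟩
    · intro i j
      fin_cases i <;> fin_cases j <;> norm_num
    · funext j
      fin_cases j <;>
        simp [Matrix.mulVec, Matrix.mul_apply, dotProduct, Fin.sum_univ_succ] <;>
        norm_num
end
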